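/- arXiv:1904.04519 — 5 statements merged into one kernel-verified Lean document; each statement's English description precedes it below -/
import Mathlib

section
/- Every induced subcomplex of a d-collapsible simplicial complex is d-collapsible. -/
variable {V : Type*} [Fintype V] [DecidableEq V]

open Finset


/-- `W` dominates the set `A` in `G`: every vertex of `A` is in `W` or adjacent to a vertex of `W`. -/
def Dominates (G : SimpleGraph V) (W A : Finset V) : Prop :=
  ∀ a ∈ A, a ∈ W ∨ ∃ w ∈ W, G.Adj w a

/-- `I` is an independent set of `G`. -/
def IndepSet (G : SimpleGraph V) (I : Finset V) : Prop :=
  ∀ u ∈ I, ∀ v ∈ I, ¬ G.Adj u v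

instance (G : SimpleGraph V) [DecidableRel G.Adj] (I : Finset V) :
    Decidable (IndepSet G I) := by unfold IndepSet; infer_instance

/-- The domination number of `G`. -/
noncomputable def gamma (G : SimpleGraph V) : ℕ :=
  sInf {k | ∃ W : Finset V, W.card = k ∧ Dominates G W Finset.univ}

/-- The independence domination number of `G`. -/
noncomputable def igamma (G : SimpleGraph V) : ℕ :=
  sInf {k | ∀ I : Finset V, IndepSet G I → ∃ W : Finset V, W.card ≤ k ∧ Dominates G W I}

/-- The noncover complex of `G`: faces are the vertex sets whose complement is not independent. -/
def NC (G : SimpleGraph V) [DecidableRel G.Adj] : Finset (Finset V) :=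
  Finset.univ.filter fun W => ¬ IndepSet G Wᶜ

/-- The independence complex of `G`. -/
def IndComplex (G : SimpleGraph V) [DecidableRel G.Adj] : Finset (Finset V) :=
  Finset.univ.filter fun I => IndepSet G I

/-- The combinatorial Alexander dual of a complex on the full vertex set `V`. -/
def AlexDual (K : Finset (Finset V)) : Finset (Finset V) :=
  Finset.univ.filter fun s => sᶜ ∉ K

/-- `K` is a simplicial complex (downward closed family of finite sets). -/
def IsComplex (K : Finset (Finset V)) : Prop :=
  ∀ σ ∈ K, ∀ τ ⊆ σ, τ ∈ K

/-- `s` is a maximal face (facet) of `K`. -/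
def IsMaxFace (K : Finset (Finset V)) (s : Finset V) : Prop :=
  s ∈ K ∧ ∀ t ∈ K, s ⊆ t → t = s

/-- `σ` is a free face of `K`: a face contained in a unique maximal face. -/
def IsFreeFace (K : Finset (Finset V)) (σ : Finset V) : Prop :=
  σ ∈ K ∧ ∃ τ ∈ K, σ ⊆ τ ∧ ∀ ρ ∈ K, σ ⊆ ρ → ρ ⊆ τ

/-- `K'` is obtained from `K` by an elementary `d`-collapse. -/
def ElemCollapse (d : ℕ) (K K' : Finset (Finset V)) : Prop :=
  ∃ σ : Finset V, IsFreeFace K σ ∧ σ.card ≤ d ∧ K' = K.filter fun ρ => ¬ σ ⊆ ρ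

/-- `K` is `d`-collapsible. -/
def Collapsible (d : ℕ) (K : Finset (Finset V)) : Prop :=
  Relation.ReflTransGen (ElemCollapse d) K ∅

/-- chordality -/
def IsChordal (G : SimpleGraph V) : Prop :=
  ∀ (u : V) (c : G.Walk u u), c.IsCycle → 4 ≤ c.length →
    ∃ x ∈ c.support, ∃ y ∈ c.support, G.Adj x y ∧ s(x, y) ∉ c.edges

/-- simplicial vertex -/
def IsSimplicialVtx (G : SimpleGraph V) (v : V) : Prop :=
  ∀ x y : V, G.Adj v x → G.Adj v y → x ≠ y → G.Adj x y

lemma aux_induced (d : ℕ) (U : Finset V) :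
    ∀ K : Finset (Finset V), Relation.ReflTransGen (ElemCollapse d) K ∅ → IsComplex K →
      Collapsible d (K.filter fun s => s ⊆ U) := by
  intro K hcol
  induction hcol using Relation.ReflTransGen.head_induction_on with
  | refl => intro _; simp only [Finset.filter_empty]; exact Relation.ReflTransGen.refl
  | head h _ ih =>
    rename_i K K' _
    intro hK
    obtain ⟨σ, ⟨hσK, τ, hτK, hστ, hmax⟩, hcard, hKeq⟩ := h
    have hK' : IsComplex K' := by
      intro ρ hρ π hπ
      subst hKeq
      simp only [Finset.mem_filter] at hρ ⊢
      exact ⟨hK ρ hρ.1 π hπ, fun hs => hρ.2 (hs.trans hπ)⟩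
    by_cases hσU : σ ⊆ U
    · refine Relation.ReflTransGen.head ⟨σ, ⟨?_, τ ∩ U, ?_, ?_, ?_⟩, hcard, ?_⟩ (ih hK')
      · exact Finset.mem_filter.2 ⟨hσK, hσU⟩
      · exact Finset.mem_filter.2 ⟨hK τ hτK _ Finset.inter_subset_left,
          Finset.inter_subset_right⟩
      · exact Finset.subset_inter hστ hσU
      · intro ρ hρ hσρ
        rw [Finset.mem_filter] at hρ
        exact Finset.subset_inter (hmax ρ hρ.1 hσρ) hρ.2
      · subst hKeq
        rw [Finset.filter_filter, Finset.filter_filter]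
        exact Finset.filter_congr (fun x _ => by tauto)
    · have heq : (K'.filter fun s => s ⊆ U) = K.filter fun s => s ⊆ U := by
        subst hKeq
        rw [Finset.filter_filter]
        exact Finset.filter_congr fun x _ =>
          ⟨fun h => h.2, fun h => ⟨fun hs => hσU (hs.trans h), h⟩⟩
      rw [← heq]
      exact ih hK'

/-- Every induced subcomplex of a `d`-collapsible complex is `d`-collapsible. -/
theorem induced_subcomplex_collapsible (K : Finset (Finset V)) (hK : IsComplex K) (d : ℕ)
    (hcol : Collapsible d K) (U : Finset V) :
    Collapsible d (K.filter fun s => s ⊆ U) :=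
  aux_induced d U K hcol hK
end

section
/- Every finite chordal graph with at least one vertex contains a simplicial vertex, i.e., a vertex whose neighborhood induces a complete subgraph. -/
variable {V : Type*} [Fintype V] [DecidableEq V]

open Finset


namespace ChordalAux

open SimpleGraph

set_option linter.unusedSectionVars false

variable {V' : Type*} [Fintype V'] [DecidableEq V']

/-- The restriction of `G` to vertices in `t` (as a graph on the same vertex type). -/
def Hg (G : SimpleGraph V') (t : Finset V') : SimpleGraph V' where
  Adj u v := G.Adj u v ∧ u ∈ t ∧ v ∈ t
  symm := ⟨by rintro u v ⟨h, hu, hv⟩; exact ⟨h.symm, hv, hu⟩⟩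
  loopless := ⟨by rintro u ⟨h, _, _⟩; exact G.irrefl h⟩

lemma hg_le (G : SimpleGraph V') (t : Finset V') : Hg G t ≤ G := by
  intro u v h; exact h.1

lemma hg_support_mem {G : SimpleGraph V'} {t : Finset V'} {u v : V'}
    (w : (Hg G t).Walk u v) (hu : u ∈ t) : ∀ z ∈ w.support, z ∈ t := by
  induction w with
  | nil => intro z hz; rw [SimpleGraph.Walk.support_nil, List.mem_singleton] at hz; subst hz; exact hu
  | cons h p ih =>
    intro z hz
    rw [SimpleGraph.Walk.support_cons, List.mem_cons] at hz
    rcases hz with rfl | hz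
    · exact hu
    · exact ih h.2.2 z hz

lemma reach_transfer {G : SimpleGraph V'} {t t' : Finset V'} {u v : V'}
    (w : (Hg G t).Walk u v) (h : ∀ z ∈ w.support, z ∈ t') : (Hg G t').Reachable u v := by
  induction w with
  | nil => exact Reachable.refl _
  | @cons a m c hadj p ih =>
    have h1 : (Hg G t').Adj a m := ⟨hadj.1, h a (by simp), h m (by simp)⟩
    exact h1.reachable.trans (ih fun z hz => h z (by simp [hz]))

lemma shortcut {G : SimpleGraph V'} {x y u v : V'} (w : G.Walk x y) (hadj : G.Adj u v)
    (hu : u ∈ w.support) (hv : v ∈ w.support) (he : s(u, v) ∉ w.edges) :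
    ∃ w' : G.Walk x y, w'.length < w.length := by
  induction w with
  | nil =>
    rw [SimpleGraph.Walk.support_nil, List.mem_singleton] at hu hv
    subst hu; subst hv; exact absurd hadj G.irrefl
  | @cons a m c h p ih =>
    rw [SimpleGraph.Walk.support_cons, List.mem_cons] at hu hv
    rw [SimpleGraph.Walk.edges_cons, List.mem_cons] at he
    push_neg at he
    obtain ⟨he1, he2⟩ := he
    by_cases hua : u = a
    · subst hua
      have hvp : v ∈ p.support := by
        rcases hv with rfl | hv
        · exact absurd rfl hadj.ne'.symm
        · exact hv
      have hvm : v ≠ m := by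
        rintro rfl; exact he1 rfl
      refine ⟨SimpleGraph.Walk.cons hadj (p.dropUntil v hvp), ?_⟩
      have hspec := SimpleGraph.Walk.take_spec p hvp
      have hlen : (p.takeUntil v hvp).length + (p.dropUntil v hvp).length = p.length := by
        rw [← SimpleGraph.Walk.length_append, hspec]
      have h2 : (p.takeUntil v hvp).length ≠ 0 := fun h0 =>
        hvm (SimpleGraph.Walk.eq_of_length_eq_zero h0).symm
      simp only [SimpleGraph.Walk.length_cons]
      omega
    · by_cases hva : v = a
      · subst hva
        have hup : u ∈ p.support := by
          rcases hu with rfl | hu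
          · exact absurd rfl hua
          · exact hu
        have hum : u ≠ m := by
          rintro rfl
          exact he1 (Sym2.eq_swap)
        refine ⟨SimpleGraph.Walk.cons hadj.symm (p.dropUntil u hup), ?_⟩
        have hspec := SimpleGraph.Walk.take_spec p hup
        have hlen : (p.takeUntil u hup).length + (p.dropUntil u hup).length = p.length := by
          rw [← SimpleGraph.Walk.length_append, hspec]
        have h2 : (p.takeUntil u hup).length ≠ 0 := fun h0 =>
          hum (SimpleGraph.Walk.eq_of_length_eq_zero h0).symm
        simp only [SimpleGraph.Walk.length_cons]
        omega
      · have hup : u ∈ p.support := by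
          rcases hu with rfl | hu
          · exact absurd rfl hua
          · exact hu
        have hvp : v ∈ p.support := by
          rcases hv with rfl | hv
          · exact absurd rfl hva
          · exact hv
        obtain ⟨p', hp'⟩ := ih hup hvp he2
        exact ⟨SimpleGraph.Walk.cons h p', by simp only [SimpleGraph.Walk.length_cons]; omega⟩

lemma exists_min_path {G : SimpleGraph V'} {x y : V'} (hr : G.Reachable x y) :
    ∃ p : G.Walk x y, p.IsPath ∧
      ∀ u ∈ p.support, ∀ v ∈ p.support, G.Adj u v → s(u, v) ∈ p.edges := by
  classical
  obtain ⟨w0⟩ := hr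
  have hex : ∃ n, ∃ w : G.Walk x y, w.length = n := ⟨w0.length, w0, rfl⟩
  obtain ⟨w, hw⟩ := Nat.find_spec hex
  have hmin : ∀ w' : G.Walk x y, Nat.find hex ≤ w'.length := fun w' =>
    Nat.find_min' hex ⟨w', rfl⟩
  refine ⟨w.bypass, SimpleGraph.Walk.bypass_isPath w, ?_⟩
  intro u hu v hv hadj
  by_contra hne
  obtain ⟨w', hw'⟩ := shortcut w.bypass hadj hu hv hne
  have h1 : w.bypass.length ≤ w.length := SimpleGraph.Walk.length_bypass_le w
  have h2 := hmin w'
  omega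

lemma two_le_length {G : SimpleGraph V'} {x y : V'} (p : G.Walk x y) (hxy : x ≠ y)
    (hadj : ¬ G.Adj x y) : 2 ≤ p.length := by
  cases p with
  | nil => exact absurd rfl hxy
  | cons h q =>
    cases q with
    | nil => exact absurd h hadj
    | cons h' q' => simp only [SimpleGraph.Walk.length_cons]; omega

lemma append_isCycle {G : SimpleGraph V'} {x y : V'} (p : G.Walk x y) (q : G.Walk y x)
    (hp : p.IsPath) (hq : q.IsPath) (hnadj : ¬ G.Adj x y)
    (hint : ∀ z, z ∈ p.support → z ∈ q.support → z = x ∨ z = y)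
    (hp2 : 2 ≤ p.length) (hq2 : 2 ≤ q.length) :
    (p.append q).IsCycle := by
  rw [SimpleGraph.Walk.isCycle_def]
  refine ⟨?_, ?_, ?_⟩
  · rw [SimpleGraph.Walk.isTrail_def, SimpleGraph.Walk.edges_append, List.nodup_append]
    refine ⟨hp.isTrail.edges_nodup, hq.isTrail.edges_nodup, ?_⟩
    intro e hep e' heq rfl
    induction e with
    | h α β =>
      have hα1 : α ∈ p.support := p.fst_mem_support_of_mem_edges hep
      have hβ1 : β ∈ p.support := p.snd_mem_support_of_mem_edges hep
      have hα2 : α ∈ q.support := q.fst_mem_support_of_mem_edges heq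
      have hβ2 : β ∈ q.support := q.snd_mem_support_of_mem_edges heq
      have hαβ : G.Adj α β := p.adj_of_mem_edges hep
      rcases hint α hα1 hα2 with rfl | rfl <;> rcases hint β hβ1 hβ2 with rfl | rfl
      · exact hαβ.ne rfl
      · exact hnadj hαβ
      · exact hnadj hαβ.symm
      · exact hαβ.ne rfl
  · intro hnil
    have := congrArg SimpleGraph.Walk.length hnil
    rw [SimpleGraph.Walk.length_append] at this
    rw [SimpleGraph.Walk.length_nil] at this
    omega
  · rw [SimpleGraph.Walk.tail_support_append, List.nodup_append]
    have hps : p.support = x :: p.support.tail := p.support_eq_cons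
    have hqs : q.support = y :: q.support.tail := q.support_eq_cons
    refine ⟨hp.support_nodup.tail, hq.support_nodup.tail, ?_⟩
    intro z hz1 z' hz2 rfl
    have hz1' : z ∈ p.support := by rw [hps]; exact List.mem_cons_of_mem _ hz1
    have hz2' : z ∈ q.support := by rw [hqs]; exact List.mem_cons_of_mem _ hz2
    rcases hint z hz1' hz2' with rfl | rfl
    · have := hp.support_nodup
      rw [hps] at this
      exact (List.nodup_cons.mp this).1 hz1
    · have := hq.support_nodup
      rw [hqs] at this
      exact (List.nodup_cons.mp this).1 hz2

/-- `v` is simplicial within the vertex set `s`. -/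
def SimpIn (G : SimpleGraph V') (s : Finset V') (v : V') : Prop :=
  v ∈ s ∧ ∀ x ∈ s, ∀ y ∈ s, G.Adj v x → G.Adj v y → x ≠ y → G.Adj x y

lemma noreach_pair {G : SimpleGraph V'} {t : Finset V'} {a b : V'} (hab : a ≠ b)
    (hnadj : ¬ G.Adj a b) (ht : ∀ z ∈ t, z = a ∨ z = b) : ¬ (Hg G t).Reachable a b := by
  intro hr
  rw [SimpleGraph.reachable_iff_reflTransGen] at hr
  have key : ∀ z, Relation.ReflTransGen (Hg G t).Adj a z → z ≠ b := by
    intro z hz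
    induction hz with
    | refl => exact hab
    | @tail y z hy hstep ih =>
      rintro rfl
      have hy' : y = a ∨ y = z := ht y hstep.2.1
      rcases hy' with rfl | rfl
      · exact hnadj hstep.1
      · exact ih rfl
  exact key b hr rfl

lemma sep_neighbor {G : SimpleGraph V'} {s S : Finset V'} {a b c : V'}
    (has : a ∈ s) (haS : a ∉ S) (hbS : b ∉ S)
    (hsep : ¬ (Hg G (s \ S)).Reachable a b)
    (hmin : ∀ S' : Finset V', S' ⊆ s → a ∉ S' → b ∉ S' →
      ¬ (Hg G (s \ S')).Reachable a b → S.card ≤ S'.card)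
    (hSs : S ⊆ s) (hc : c ∈ S) :
    ∃ z, z ∈ s \ S ∧ (Hg G (s \ S)).Reachable a z ∧ G.Adj z c := by
  by_contra hcon
  push_neg at hcon
  have hsub : S.erase c ⊆ s := (Finset.erase_subset _ _).trans hSs
  have hsep' : ¬ (Hg G (s \ S.erase c)).Reachable a b := by
    intro hr
    rw [SimpleGraph.reachable_iff_reflTransGen] at hr
    have key : ∀ z, Relation.ReflTransGen (Hg G (s \ S.erase c)).Adj a z →
        z ∈ s \ S ∧ (Hg G (s \ S)).Reachable a z := by
      intro z hz
      induction hz with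
      | refl => exact ⟨Finset.mem_sdiff.mpr ⟨has, haS⟩, Reachable.refl _⟩
      | @tail y z hy hstep ih =>
        obtain ⟨hy1, hy2⟩ := ih
        by_cases hzc : z = c
        · subst hzc
          exact absurd hstep.1 (hcon y hy1 hy2)
        · have hz1 : z ∈ s \ S.erase c := hstep.2.2
          rw [Finset.mem_sdiff] at hz1
          have hz' : z ∈ s \ S := Finset.mem_sdiff.mpr
            ⟨hz1.1, fun hzS => hz1.2 (Finset.mem_erase.mpr ⟨hzc, hzS⟩)⟩
          exact ⟨hz', hy2.trans (SimpleGraph.Adj.reachable ⟨hstep.1, hy1, hz'⟩)⟩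
    exact hsep (key b hr).2
  have h1 := hmin (S.erase c) hsub (fun h' => haS (Finset.mem_of_mem_erase h'))
    (fun h' => hbS (Finset.mem_of_mem_erase h')) hsep'
  have h2 : (S.erase c).card < S.card := Finset.card_erase_lt_of_mem hc
  omega

lemma exists_side_path {G : SimpleGraph V'} {s S W : Finset V'} {r x y : V'}
    (hW : ∀ z, z ∈ W ↔ z ∈ s \ S ∧ (Hg G (s \ S)).Reachable r z)
    (hr : r ∈ s \ S)
    (hxy : x ≠ y) (hnxy : ¬ G.Adj x y)
    (hzx : ∃ z, z ∈ W ∧ G.Adj z x) (hzy : ∃ z, z ∈ W ∧ G.Adj z y) :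
    ∃ p : G.Walk x y, p.IsPath ∧ 2 ≤ p.length ∧ (∀ z ∈ p.support, z = x ∨ z = y ∨ z ∈ W) ∧
      (∀ u ∈ p.support, ∀ v ∈ p.support, G.Adj u v → s(u, v) ∈ p.edges) := by
  classical
  set T : Finset V' := insert x (insert y W) with hT
  have hxT : x ∈ T := Finset.mem_insert_self _ _
  have hyT : y ∈ T := Finset.mem_insert_of_mem (Finset.mem_insert_self _ _)
  have hWT : ∀ z ∈ W, z ∈ T := fun z hz =>
    Finset.mem_insert_of_mem (Finset.mem_insert_of_mem hz)
  have hmemT : ∀ z ∈ T, z = x ∨ z = y ∨ z ∈ W := by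
    intro z hz
    rw [hT, Finset.mem_insert, Finset.mem_insert] at hz
    tauto
  -- any element of W is reachable from any other within T
  have reachW : ∀ z ∈ W, (Hg G T).Reachable r z := by
    intro z hz
    obtain ⟨-, ⟨w1⟩⟩ := (hW z).mp hz
    apply reach_transfer w1
    intro u hu
    apply hWT
    rw [hW u]
    refine ⟨hg_support_mem w1 hr u hu, ⟨w1.takeUntil u hu⟩⟩
  obtain ⟨zx, hzxW, hzxadj⟩ := hzx
  obtain ⟨zy, hzyW, hzyadj⟩ := hzy
  have hreach : (Hg G T).Reachable x y := by
    have h1 : (Hg G T).Adj x zx := ⟨hzxadj.symm, hxT, hWT _ hzxW⟩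
    have h2 : (Hg G T).Adj zy y := ⟨hzyadj, hWT _ hzyW, hyT⟩
    exact (h1.reachable.trans ((reachW zx hzxW).symm.trans (reachW zy hzyW))).trans h2.reachable
  obtain ⟨p, hp, hchord⟩ := exists_min_path hreach
  have hsupT : ∀ z ∈ p.support, z ∈ T := hg_support_mem p hxT
  have hlen : 2 ≤ p.length := two_le_length p hxy (fun h => hnxy h.1)
  refine ⟨p.transfer G (fun e he => SimpleGraph.edgeSet_mono (hg_le G T)
      (p.edges_subset_edgeSet he)), hp.transfer _, ?_, ?_, ?_⟩
  · rw [SimpleGraph.Walk.length_transfer]; exact hlen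
  · intro z hz
    rw [SimpleGraph.Walk.support_transfer] at hz
    exact hmemT z (hsupT z hz)
  · intro u hu v hv hadj
    rw [SimpleGraph.Walk.support_transfer] at hu hv
    rw [SimpleGraph.Walk.edges_transfer]
    exact hchord u hu v hv ⟨hadj, hsupT u hu, hsupT v hv⟩

lemma sep_clique {G : SimpleGraph V'} (hG : IsChordal G) {s S : Finset V'} {a b : V'}
    (has : a ∈ s) (hbs : b ∈ s) (haS : a ∉ S) (hbS : b ∉ S)
    (hsep : ¬ (Hg G (s \ S)).Reachable a b)
    (nbrA : ∀ c ∈ S, ∃ z, z ∈ s \ S ∧ (Hg G (s \ S)).Reachable a z ∧ G.Adj z c)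
    (nbrB : ∀ c ∈ S, ∃ z, z ∈ s \ S ∧ (Hg G (s \ S)).Reachable b z ∧ G.Adj z c) :
    ∀ x ∈ S, ∀ y ∈ S, x ≠ y → G.Adj x y := by
  intro x hxS y hyS hxy
  by_contra hnxy
  classical
  set A : Finset V' := (s \ S).filter (fun z => (Hg G (s \ S)).Reachable a z) with hA
  set B : Finset V' := (s \ S).filter (fun z => (Hg G (s \ S)).Reachable b z) with hB
  have hmemA : ∀ z, z ∈ A ↔ z ∈ s \ S ∧ (Hg G (s \ S)).Reachable a z := by
    intro z; rw [hA, Finset.mem_filter]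
  have hmemB : ∀ z, z ∈ B ↔ z ∈ s \ S ∧ (Hg G (s \ S)).Reachable b z := by
    intro z; rw [hB, Finset.mem_filter]
  have hAB : ∀ z, z ∈ A → z ∈ B → False := by
    intro z hz1 hz2
    exact hsep (((hmemA z).mp hz1).2.trans ((hmemB z).mp hz2).2.symm)
  have haA : a ∈ s \ S := Finset.mem_sdiff.mpr ⟨has, haS⟩
  have hbB : b ∈ s \ S := Finset.mem_sdiff.mpr ⟨hbs, hbS⟩
  obtain ⟨p, hppath, hplen, hpsup, hpchord⟩ := exists_side_path hmemA haA hxy hnxy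
    (by obtain ⟨z, h1, h2, h3⟩ := nbrA x hxS; exact ⟨z, (hmemA z).mpr ⟨h1, h2⟩, h3⟩)
    (by obtain ⟨z, h1, h2, h3⟩ := nbrA y hyS; exact ⟨z, (hmemA z).mpr ⟨h1, h2⟩, h3⟩)
  obtain ⟨q, hqpath, hqlen, hqsup, hqchord⟩ := exists_side_path hmemB hbB (Ne.symm hxy)
    (fun h => hnxy h.symm)
    (by obtain ⟨z, h1, h2, h3⟩ := nbrB y hyS; exact ⟨z, (hmemB z).mpr ⟨h1, h2⟩, h3⟩)
    (by obtain ⟨z, h1, h2, h3⟩ := nbrB x hxS; exact ⟨z, (hmemB z).mpr ⟨h1, h2⟩, h3⟩)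
  have hxA : x ∉ A := fun h => (Finset.mem_sdiff.mp ((hmemA x).mp h).1).2 hxS
  have hyA : y ∉ A := fun h => (Finset.mem_sdiff.mp ((hmemA y).mp h).1).2 hyS
  have hxB : x ∉ B := fun h => (Finset.mem_sdiff.mp ((hmemB x).mp h).1).2 hxS
  have hyB : y ∉ B := fun h => (Finset.mem_sdiff.mp ((hmemB y).mp h).1).2 hyS
  have hint : ∀ z, z ∈ p.support → z ∈ q.support → z = x ∨ z = y := by
    intro z hz1 hz2
    rcases hpsup z hz1 with rfl | rfl | hzA
    · exact Or.inl rfl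
    · exact Or.inr rfl
    · rcases hqsup z hz2 with rfl | rfl | hzB
      · exact Or.inr rfl
      · exact Or.inl rfl
      · exact absurd (hAB z hzA hzB) (fun h => h)
  have hcyc : (p.append q).IsCycle := append_isCycle p q hppath hqpath hnxy hint hplen hqlen
  have hclen : 4 ≤ (p.append q).length := by
    rw [SimpleGraph.Walk.length_append]; omega
  obtain ⟨x', hx', y', hy', hadj', hne'⟩ := hG x (p.append q) hcyc hclen
  rw [SimpleGraph.Walk.mem_support_append_iff] at hx' hy'
  have hedge : s(x', y') ∉ p.edges ∧ s(x', y') ∉ q.edges := by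
    rw [SimpleGraph.Walk.edges_append, List.mem_append] at hne'
    tauto
  -- cross-edge impossibility
  have cross : ∀ u v : V', u ∈ A → v ∈ B → G.Adj u v → False := by
    intro u v huA hvB huv
    have hu' := (hmemA u).mp huA
    have hv' := (hmemB v).mp hvB
    exact hAB v ((hmemA v).mpr ⟨hv'.1, hu'.2.trans (SimpleGraph.Adj.reachable
      ⟨huv, hu'.1, hv'.1⟩)⟩) hvB
  rcases hx' with hx'p | hx'q <;> rcases hy' with hy'p | hy'q
  · exact hedge.1 (hpchord x' hx'p y' hy'p hadj')
  · -- x' in p, y' in q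
    by_cases hx'q : x' ∈ q.support
    · exact hedge.2 (hqchord x' hx'q y' hy'q hadj')
    · by_cases hy'p : y' ∈ p.support
      · exact hedge.1 (hpchord x' hx'p y' hy'p hadj')
      · have hx'A : x' ∈ A := by
          rcases hpsup x' hx'p with rfl | rfl | h
          · exact absurd q.end_mem_support hx'q
          · exact absurd q.start_mem_support hx'q
          · exact h
        have hy'B : y' ∈ B := by
          rcases hqsup y' hy'q with rfl | rfl | h
          · exact absurd p.end_mem_support hy'p
          · exact absurd p.start_mem_support hy'p
          · exact h
        exact cross x' y' hx'A hy'B hadj'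
  · -- x' in q, y' in p : symmetric
    by_cases hy'q : y' ∈ q.support
    · exact hedge.2 (hqchord x' hx'q y' hy'q hadj')
    · by_cases hx'p : x' ∈ p.support
      · exact hedge.1 (hpchord x' hx'p y' hy'p hadj')
      · have hy'A : y' ∈ A := by
          rcases hpsup y' hy'p with rfl | rfl | h
          · exact absurd q.end_mem_support hy'q
          · exact absurd q.start_mem_support hy'q
          · exact h
        have hx'B : x' ∈ B := by
          rcases hqsup x' hx'q with rfl | rfl | h
          · exact absurd p.end_mem_support hx'p
          · exact absurd p.start_mem_support hx'p
          · exact h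
        exact cross y' x' hy'A hx'B hadj'.symm
  · exact hedge.2 (hqchord x' hx'q y' hy'q hadj')

lemma side {G : SimpleGraph V'} {n : ℕ}
    (hIH : ∀ s' : Finset V', s'.card ≤ n → s'.Nonempty →
      (∀ x ∈ s', ∀ y ∈ s', x ≠ y → G.Adj x y) ∨
      ∃ a' ∈ s', ∃ b' ∈ s', a' ≠ b' ∧ ¬ G.Adj a' b' ∧ SimpIn G s' a' ∧ SimpIn G s' b')
    {s S : Finset V'} {a b : V'}
    (hcard : s.card ≤ n + 1) (has : a ∈ s) (hbs : b ∈ s)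
    (hSs : S ⊆ s) (haS : a ∉ S) (hbS : b ∉ S)
    (hsep : ¬ (Hg G (s \ S)).Reachable a b)
    (hclq : ∀ x ∈ S, ∀ y ∈ S, x ≠ y → G.Adj x y) :
    ∃ u, u ∈ s \ S ∧ (Hg G (s \ S)).Reachable a u ∧ SimpIn G s u := by
  classical
  set A : Finset V' := (s \ S).filter (fun z => (Hg G (s \ S)).Reachable a z) with hA
  have hmemA : ∀ z, z ∈ A ↔ z ∈ s \ S ∧ (Hg G (s \ S)).Reachable a z := by
    intro z; rw [hA, Finset.mem_filter]
  have haA : a ∈ A := (hmemA a).mpr ⟨Finset.mem_sdiff.mpr ⟨has, haS⟩, Reachable.refl _⟩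
  set s' : Finset V' := A ∪ S with hs'
  have hs'sub : s' ⊆ s := by
    intro z hz
    rw [hs', Finset.mem_union] at hz
    rcases hz with hz | hz
    · exact (Finset.mem_sdiff.mp ((hmemA z).mp hz).1).1
    · exact hSs hz
  have hbs' : b ∉ s' := by
    rw [hs', Finset.mem_union]
    rintro (hb | hb)
    · exact hsep ((hmemA b).mp hb).2
    · exact hbS hb
  have hcard' : s'.card ≤ n := by
    have h1 : s' ⊆ s.erase b := fun z hz =>
      Finset.mem_erase.mpr ⟨fun h => hbs' (h ▸ hz), hs'sub hz⟩
    have h2 := Finset.card_le_card h1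
    have h3 : (s.erase b).card = s.card - 1 := Finset.card_erase_of_mem hbs
    omega
  have hclose : ∀ u, u ∈ A → ∀ x ∈ s, G.Adj u x → x ∈ s' := by
    intro u huA x hxs hadj
    by_cases hxS : x ∈ S
    · exact Finset.mem_union_right _ hxS
    · have hx' : x ∈ s \ S := Finset.mem_sdiff.mpr ⟨hxs, hxS⟩
      have hu' := (hmemA u).mp huA
      exact Finset.mem_union_left _ ((hmemA x).mpr
        ⟨hx', hu'.2.trans (SimpleGraph.Adj.reachable ⟨hadj, hu'.1, hx'⟩)⟩)
  have hlift : ∀ u, u ∈ A → SimpIn G s' u → SimpIn G s u := by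
    rintro u huA ⟨hu1, hu2⟩
    refine ⟨hs'sub hu1, fun x hx y hy h1 h2 hne => ?_⟩
    exact hu2 x (hclose u huA x hx h1) y (hclose u huA y hy h2) h1 h2 hne
  rcases hIH s' hcard' ⟨a, Finset.mem_union_left _ haA⟩ with
    hclq' | ⟨a', ha's, b', hb's, hne, hnadj, hsa, hsb⟩
  · refine ⟨a, ((hmemA a).mp haA).1, ((hmemA a).mp haA).2, hlift a haA
      ⟨Finset.mem_union_left _ haA, fun x hx y hy _ _ hne => hclq' x hx y hy hne⟩⟩
  · have hor : a' ∈ A ∨ b' ∈ A := by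
      by_contra hcon
      push_neg at hcon
      have h1 : a' ∈ S := (Finset.mem_union.mp ha's).resolve_left hcon.1
      have h2 : b' ∈ S := (Finset.mem_union.mp hb's).resolve_left hcon.2
      exact hnadj (hclq a' h1 b' h2 hne)
    rcases hor with h | h
    · exact ⟨a', ((hmemA a').mp h).1, ((hmemA a').mp h).2, hlift a' h hsa⟩
    · exact ⟨b', ((hmemA b').mp h).1, ((hmemA b').mp h).2, hlift b' h hsb⟩

lemma key {G : SimpleGraph V'} (hG : IsChordal G) :
    ∀ (n : ℕ) (s : Finset V'), s.card ≤ n → s.Nonempty →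
      (∀ x ∈ s, ∀ y ∈ s, x ≠ y → G.Adj x y) ∨
      ∃ a ∈ s, ∃ b ∈ s, a ≠ b ∧ ¬ G.Adj a b ∧ SimpIn G s a ∧ SimpIn G s b := by
  intro n
  induction n with
  | zero =>
    intro s hcard hne
    obtain ⟨z, hz⟩ := hne
    have := Finset.card_pos.mpr ⟨z, hz⟩
    omega
  | succ n ih =>
    intro s hcard hne
    by_cases hclq : ∀ x ∈ s, ∀ y ∈ s, x ≠ y → G.Adj x y
    · exact Or.inl hclq
    · right
      push_neg at hclq
      obtain ⟨a, has, b, hbs, hab, hnadj⟩ := hclq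
      classical
      -- the family of separators
      set F : Finset (Finset V') :=
        (s \ {a, b}).powerset.filter (fun S => ¬ (Hg G (s \ S)).Reachable a b) with hF
      have hFne : F.Nonempty := by
        refine ⟨s \ {a, b}, ?_⟩
        rw [hF, Finset.mem_filter, Finset.mem_powerset]
        refine ⟨Finset.Subset.refl _, noreach_pair hab hnadj ?_⟩
        intro z hz
        rw [Finset.mem_sdiff, Finset.mem_sdiff] at hz
        have h1 : z ∈ ({a, b} : Finset V') := by tauto
        rw [Finset.mem_insert, Finset.mem_singleton] at h1
        exact h1
      obtain ⟨S, hSF, hSmin⟩ := Finset.exists_min_image F Finset.card hFne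
      rw [hF, Finset.mem_filter, Finset.mem_powerset] at hSF
      obtain ⟨hSsub, hsep⟩ := hSF
      have hSs : S ⊆ s := hSsub.trans (Finset.sdiff_subset)
      have haS : a ∉ S := fun h => by
        have := hSsub h
        rw [Finset.mem_sdiff] at this
        exact this.2 (Finset.mem_insert_self _ _)
      have hbS : b ∉ S := fun h => by
        have := hSsub h
        rw [Finset.mem_sdiff] at this
        exact this.2 (Finset.mem_insert_of_mem (Finset.mem_singleton_self _))
      have hmin : ∀ S' : Finset V', S' ⊆ s → a ∉ S' → b ∉ S' →
          ¬ (Hg G (s \ S')).Reachable a b → S.card ≤ S'.card := by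
        intro S' h1 h2 h3 h4
        apply hSmin
        rw [hF, Finset.mem_filter, Finset.mem_powerset]
        refine ⟨?_, h4⟩
        intro z hz
        rw [Finset.mem_sdiff, Finset.mem_insert, Finset.mem_singleton]
        exact ⟨h1 hz, by rintro (rfl | rfl) <;> [exact h2 hz; exact h3 hz]⟩
      have hsep' : ¬ (Hg G (s \ S)).Reachable b a := fun h => hsep h.symm
      have hmin' : ∀ S' : Finset V', S' ⊆ s → b ∉ S' → a ∉ S' →
          ¬ (Hg G (s \ S')).Reachable b a → S.card ≤ S'.card := by
        intro S' h1 h2 h3 h4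
        exact hmin S' h1 h3 h2 (fun h => h4 h.symm)
      have nbrA := fun (c : V') (hc : c ∈ S) => sep_neighbor has haS hbS hsep hmin hSs hc
      have nbrB := fun (c : V') (hc : c ∈ S) => sep_neighbor hbs hbS haS hsep' hmin' hSs hc
      have hclqS := sep_clique hG has hbs haS hbS hsep nbrA nbrB
      obtain ⟨u, huAs, huA, hu⟩ := side ih hcard has hbs hSs haS hbS hsep hclqS
      obtain ⟨w, hwAs, hwB, hw⟩ := side ih hcard hbs has hSs hbS haS hsep' hclqS
      have hnuw : ¬ G.Adj u w := by
        intro h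
        exact hsep ((huA.trans (SimpleGraph.Adj.reachable ⟨h, huAs, hwAs⟩)).trans hwB.symm)
      have huw : u ≠ w := by
        rintro rfl
        exact hsep (huA.trans hwB.symm)
      exact ⟨u, hu.1, w, hw.1, huw, hnuw, hu, hw⟩

end ChordalAux
/-- Every finite chordal graph with at least one vertex has a simplicial vertex. -/
theorem chordal_has_simplicial_vertex (G : SimpleGraph V) [Nonempty V] (hG : IsChordal G) :
    ∃ v : V, IsSimplicialVtx G v := by
  classical
  obtain ⟨v⟩ := ‹Nonempty V›
  rcases ChordalAux.key hG (Finset.univ.card) Finset.univ le_rfl ⟨v, Finset.mem_univ v⟩ with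
    h | ⟨u, -, -, -, -, -, ⟨-, hu⟩, -⟩
  · exact ⟨v, fun x y _ _ hne => h x (Finset.mem_univ x) y (Finset.mem_univ y) hne⟩
  · exact ⟨u, fun x y h1 h2 hne => hu x (Finset.mem_univ x) y (Finset.mem_univ y) h1 h2 hne⟩
end

section
/- If G is a chordal graph that is not a complete graph, then G contains two non-adjacent simplicial vertices. -/
variable {V : Type*} [Fintype V] [DecidableEq V]

open Finset


section DiracAux

open SimpleGraph Walk

variable {U : Type*}

/-- Reachability via a walk whose support stays inside `X`. -/
def ReachWithin (G : SimpleGraph U) (X : Set U) (u v : U) : Prop :=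
  ∃ w : G.Walk u v, ∀ z ∈ w.support, z ∈ X

namespace ReachWithin

variable {G : SimpleGraph U} {X : Set U} {u v z : U}

lemma refl (h : u ∈ X) : ReachWithin G X u u :=
  ⟨SimpleGraph.Walk.nil, by simpa using h⟩

lemma symm (h : ReachWithin G X u v) : ReachWithin G X v u := by
  obtain ⟨w, hw⟩ := h
  exact ⟨w.reverse, fun z hz => hw z (by
    rwa [SimpleGraph.Walk.support_reverse, List.mem_reverse] at hz)⟩

lemma trans (h : ReachWithin G X u v) (h' : ReachWithin G X v z) : ReachWithin G X u z := by
  obtain ⟨w, hw⟩ := h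
  obtain ⟨w', hw'⟩ := h'
  refine ⟨w.append w', fun y hy => ?_⟩
  rw [SimpleGraph.Walk.mem_support_append_iff] at hy
  exact hy.elim (hw y) (hw' y)

lemma mem_left (h : ReachWithin G X u v) : u ∈ X :=
  h.choose_spec u h.choose.start_mem_support

lemma mem_right (h : ReachWithin G X u v) : v ∈ X :=
  h.choose_spec v h.choose.end_mem_support

lemma adj (h : ReachWithin G X u v) (ha : G.Adj v z) (hz : z ∈ X) : ReachWithin G X u z := by
  obtain ⟨w, hw⟩ := h
  refine ⟨w.concat ha, fun y hy => ?_⟩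
  rw [SimpleGraph.Walk.support_concat, List.mem_append] at hy
  rcases hy with hy | hy
  · exact hw y hy
  · simp only [List.mem_singleton] at hy
    exact hy ▸ hz

end ReachWithin

lemma reachWithin_of_mem_support [DecidableEq U] {G : SimpleGraph U} {X : Set U} {u v z : U}
    {w : G.Walk u v} (hw : ∀ y ∈ w.support, y ∈ X) (hz : z ∈ w.support) :
    ReachWithin G X u z :=
  ⟨w.takeUntil z hz, fun y hy => hw y (w.support_takeUntil_subset hz hy)⟩

/-- If a walk has a chord, there is a strictly shorter walk on the same support. -/
lemma exists_shorter_walk [DecidableEq U] {G : SimpleGraph U} :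
    ∀ {x y : U} (p : G.Walk x y) (u v : U), u ∈ p.support → v ∈ p.support →
      G.Adj u v → s(u, v) ∉ p.edges →
      ∃ q : G.Walk x y, q.length < p.length ∧ ∀ z ∈ q.support, z ∈ p.support := by
  intro x y p
  induction p with
  | nil =>
    intro u v hu hv ha _
    simp only [SimpleGraph.Walk.support_nil, List.mem_singleton] at hu hv
    subst hu; subst hv
    exact absurd ha (G.irrefl)
  | @cons x c y h t ih =>
    intro u v hu hv ha he
    simp only [SimpleGraph.Walk.support_cons, List.mem_cons] at hu hv
    simp only [SimpleGraph.Walk.edges_cons, List.mem_cons] at he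
    push_neg at he
    obtain ⟨he1, he2⟩ := he
    by_cases htu : u ∈ t.support <;> by_cases htv : v ∈ t.support
    · obtain ⟨q, hq1, hq2⟩ := ih u v htu htv ha he2
      refine ⟨SimpleGraph.Walk.cons h q, by simpa using hq1, fun z hz => ?_⟩
      simp only [SimpleGraph.Walk.support_cons, List.mem_cons] at hz ⊢
      exact hz.imp id (hq2 z)
    · -- v = x, u ∈ t.support
      have hvx : v = x := (hv.resolve_right htv)
      subst hvx
      have huc : u ≠ c := by
        rintro rfl
        exact he1 (Sym2.eq_swap)
      refine ⟨SimpleGraph.Walk.cons ha.symm (t.dropUntil u htu), ?_, fun z hz => ?_⟩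
      · have hspec := congrArg SimpleGraph.Walk.length (t.take_spec htu)
        rw [SimpleGraph.Walk.length_append] at hspec
        have htl : 0 < (t.takeUntil u htu).length := by
          rcases Nat.eq_zero_or_pos (t.takeUntil u htu).length with h0 | h0
          · exact absurd (SimpleGraph.Walk.eq_of_length_eq_zero h0) huc.symm
          · exact h0
        simp only [SimpleGraph.Walk.length_cons]
        omega
      · simp only [SimpleGraph.Walk.support_cons, List.mem_cons] at hz ⊢
        exact hz.imp id (fun hz' => t.support_dropUntil_subset htu hz')
    · -- u = x, v ∈ t.support
      have hux : u = x := (hu.resolve_right htu)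
      subst hux
      have hvc : v ≠ c := by
        rintro rfl
        exact he1 rfl
      refine ⟨SimpleGraph.Walk.cons ha (t.dropUntil v htv), ?_, fun z hz => ?_⟩
      · have hspec := congrArg SimpleGraph.Walk.length (t.take_spec htv)
        rw [SimpleGraph.Walk.length_append] at hspec
        have htl : 0 < (t.takeUntil v htv).length := by
          rcases Nat.eq_zero_or_pos (t.takeUntil v htv).length with h0 | h0
          · exact absurd (SimpleGraph.Walk.eq_of_length_eq_zero h0) hvc.symm
          · exact h0
        simp only [SimpleGraph.Walk.length_cons]
        omega
      · simp only [SimpleGraph.Walk.support_cons, List.mem_cons] at hz ⊢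
        exact hz.imp id (fun hz' => t.support_dropUntil_subset htv hz')
    · have hux : u = x := (hu.resolve_right htu)
      have hvx : v = x := (hv.resolve_right htv)
      subst hux; subst hvx
      exact absurd ha (G.irrefl)

/-- A minimum-length walk inside `X` is an induced path. -/
lemma exists_min_path [DecidableEq U] {G : SimpleGraph U} {X : Set U} {x y : U}
    (h : ∃ w : G.Walk x y, ∀ z ∈ w.support, z ∈ X) :
    ∃ p : G.Walk x y, p.IsPath ∧ (∀ z ∈ p.support, z ∈ X) ∧
      ∀ u v, u ∈ p.support → v ∈ p.support → G.Adj u v → s(u, v) ∈ p.edges := by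
  classical
  set T : Set ℕ := {n | ∃ w : G.Walk x y, (∀ z ∈ w.support, z ∈ X) ∧ w.length = n} with hT
  have hne : T.Nonempty := ⟨h.choose.length, h.choose, h.choose_spec, rfl⟩
  obtain ⟨w, hw, hlen⟩ := Nat.sInf_mem hne
  have hbX : ∀ z ∈ w.bypass.support, z ∈ X := fun z hz => hw z (w.support_bypass_subset hz)
  have hmin : w.bypass.length = sInf T := by
    refine le_antisymm (hlen ▸ w.length_bypass_le) (Nat.sInf_le ⟨w.bypass, hbX, rfl⟩)
  refine ⟨w.bypass, w.bypass_isPath, hbX, ?_⟩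
  intro u v hu hv ha
  by_contra hedge
  obtain ⟨q, hq1, hq2⟩ := exists_shorter_walk w.bypass u v hu hv ha hedge
  have : sInf T ≤ q.length := Nat.sInf_le ⟨q, fun z hz => hbX z (hq2 z hz), rfl⟩
  omega

lemma walk_length_two_of_ne_of_not_adj {G : SimpleGraph U} {x y : U} (p : G.Walk x y)
    (hne : x ≠ y) (hnadj : ¬ G.Adj x y) : 2 ≤ p.length := by
  rcases Nat.lt_or_ge p.length 2 with h | h
  · interval_cases hpl : p.length
    · exact absurd (SimpleGraph.Walk.eq_of_length_eq_zero hpl) hne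
    · exact absurd (p.adj_of_length_eq_one hpl) hnadj
  · exact h

/-- Gluing two internally disjoint paths between nonadjacent vertices gives a cycle. -/
lemma append_reverse_isCycle {G : SimpleGraph U} {x y : U} {p q : G.Walk x y}
    (hp : p.IsPath) (hq : q.IsPath) (hne : x ≠ y) (hxy : ¬ G.Adj x y)
    (hint : ∀ z, z ∈ p.support → z ∈ q.support → z = x ∨ z = y) :
    (p.append q.reverse).IsCycle := by
  rw [SimpleGraph.Walk.isCycle_def]
  refine ⟨?_, ?_, ?_⟩
  · rw [SimpleGraph.Walk.isTrail_def, SimpleGraph.Walk.edges_append,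
      SimpleGraph.Walk.edges_reverse]
    refine List.Nodup.append hp.isTrail.edges_nodup
      (List.nodup_reverse.mpr hq.isTrail.edges_nodup) ?_
    intro e he1 he2
    rw [List.mem_reverse] at he2
    induction e with
    | _ a b =>
      have hab : G.Adj a b := p.adj_of_mem_edges he1
      have hap : a ∈ p.support := p.fst_mem_support_of_mem_edges he1
      have hbp : b ∈ p.support := p.snd_mem_support_of_mem_edges he1
      have haq : a ∈ q.support := q.fst_mem_support_of_mem_edges he2
      have hbq : b ∈ q.support := q.snd_mem_support_of_mem_edges he2
      rcases hint a hap haq with rfl | rfl <;> rcases hint b hbp hbq with rfl | rfl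
      · exact hab.ne rfl
      · exact hxy hab
      · exact hxy hab.symm
      · exact hab.ne rfl
  · intro hnil
    have : (p.append q.reverse).length = 0 := by rw [hnil]; rfl
    rw [SimpleGraph.Walk.length_append, SimpleGraph.Walk.length_reverse] at this
    have := walk_length_two_of_ne_of_not_adj p hne hxy
    omega
  · rw [SimpleGraph.Walk.tail_support_append]
    have hxp : x ∉ p.support.tail := by
      have := hp.support_nodup
      rw [p.support_eq_cons, List.nodup_cons] at this
      exact this.1
    have hyq : y ∉ q.reverse.support.tail := by
      have := hq.reverse.support_nodup
      rw [q.reverse.support_eq_cons, List.nodup_cons] at this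
      exact this.1
    refine List.Nodup.append ?_ ?_ ?_
    · exact hp.support_nodup.sublist (List.tail_sublist _)
    · exact hq.reverse.support_nodup.sublist (List.tail_sublist _)
    · intro z hz1 hz2
      have hzp : z ∈ p.support := List.mem_of_mem_tail hz1
      have hzq : z ∈ q.support := by
        have := List.mem_of_mem_tail hz2
        rwa [SimpleGraph.Walk.support_reverse, List.mem_reverse] at this
      rcases hint z hzp hzq with rfl | rfl
      · exact hxp hz1
      · exact hyq hz2

end DiracAux

section DiracMain

variable {U : Type*}

lemma IsChordal.induce {G : SimpleGraph U} (hG : IsChordal G) (s : Set U) :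
    IsChordal (G.induce s) := by
  intro u c hc hlen
  have hinj : Function.Injective ((SimpleGraph.Embedding.induce s (G := G)).toHom : ↥s → U) :=
    Subtype.val_injective
  obtain ⟨x, hx, y, hy, hxy, he⟩ := hG ↑u
    (c.map (SimpleGraph.Embedding.induce s (G := G)).toHom)
    ((SimpleGraph.Walk.map_isCycle_iff_of_injective hinj).mpr hc)
    (hlen.trans_eq (SimpleGraph.Walk.length_map (SimpleGraph.Embedding.induce s (G := G)).toHom c).symm)
  change x ∈ (c.map (SimpleGraph.Embedding.induce s (G := G)).toHom).support at hx
  change y ∈ (c.map (SimpleGraph.Embedding.induce s (G := G)).toHom).support at hy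
  change s(x, y) ∉ (c.map (SimpleGraph.Embedding.induce s (G := G)).toHom).edges at he
  rw [SimpleGraph.Walk.support_map, List.mem_map] at hx hy
  obtain ⟨x', hx', rfl⟩ := hx
  obtain ⟨y', hy', rfl⟩ := hy
  refine ⟨x', hx', y', hy', hxy, fun hc' => he ?_⟩
  rw [SimpleGraph.Walk.edges_map]
  exact List.mem_map.mpr ⟨s(x', y'), hc', Sym2.map_pair_eq _ _ _⟩

lemma exists_adj_reachWithin [DecidableEq U] {G : SimpleGraph U} {X : Set U} {a b x : U}
    (hax : a ≠ x) (hno : ¬ ReachWithin G X a b) (hyes : ReachWithin G (insert x X) a b) :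
    ∃ u, G.Adj x u ∧ ReachWithin G X a u := by
  obtain ⟨w, hw⟩ := hyes
  have hxs : x ∈ w.support := by
    by_contra hxs
    refine hno ⟨w, fun z hz => ?_⟩
    rcases hw z hz with h | h
    · exact absurd (h ▸ hz) hxs
    · exact h
  obtain ⟨u, hadj, q, hq⟩ :=
    SimpleGraph.Walk.exists_eq_cons_of_ne hax.symm ((w.takeUntil x hxs).reverse)
  have hcount : ((w.takeUntil x hxs).reverse).support.count x = 1 := by
    rw [SimpleGraph.Walk.support_reverse, List.count_reverse]
    exact w.count_support_takeUntil_eq_one hxs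
  have hxq : x ∉ q.support := by
    rw [hq, SimpleGraph.Walk.support_cons] at hcount
    simp only [List.count_cons_self] at hcount
    intro hmem
    have hpos : 0 < q.support.count x := List.count_pos_iff.mpr hmem
    omega
  have hqX : ∀ z ∈ q.support, z ∈ X := by
    intro z hz
    have hzw : z ∈ (w.takeUntil x hxs).reverse.support := by
      rw [hq, SimpleGraph.Walk.support_cons]; exact List.mem_cons_of_mem _ hz
    rw [SimpleGraph.Walk.support_reverse, List.mem_reverse] at hzw
    have : z ∈ insert x X := hw z (w.support_takeUntil_subset hxs hzw)
    rcases this with h | h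
    · exact absurd (h ▸ hz) hxq
    · exact h
  exact ⟨u, hadj, ⟨q.reverse, fun z hz => hqX z (by
    rwa [SimpleGraph.Walk.support_reverse, List.mem_reverse] at hz)⟩⟩

variable [Fintype U] [DecidableEq U]

lemma exists_min_separator {G : SimpleGraph U} {a b : U} (hab : a ≠ b) (hnadj : ¬ G.Adj a b) :
    ∃ S : Finset U, a ∉ S ∧ b ∉ S ∧ ¬ ReachWithin G ((↑S : Set U))ᶜ a b ∧
      ∀ x ∈ S, (∃ u, G.Adj x u ∧ ReachWithin G ((↑S : Set U))ᶜ a u) ∧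
               (∃ u, G.Adj x u ∧ ReachWithin G ((↑S : Set U))ᶜ b u) := by
  classical
  set Sep : Finset U → Prop :=
    fun S => a ∉ S ∧ b ∉ S ∧ ¬ ReachWithin G ((↑S : Set U))ᶜ a b with hSep
  have hSep0 : Sep (Finset.univ \ {a, b}) := by
    refine ⟨by simp, by simp, ?_⟩
    rintro ⟨w, hw⟩
    obtain ⟨z, hz, t, ht⟩ := SimpleGraph.Walk.exists_eq_cons_of_ne hab w
    have hzs : z ∈ w.support := by
      rw [ht, SimpleGraph.Walk.support_cons]
      exact List.mem_cons_of_mem _ t.start_mem_support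
    have := hw z hzs
    simp only [Finset.coe_sdiff, Finset.coe_univ, Set.mem_compl_iff, Set.mem_diff,
      Set.mem_univ, true_and, not_not, Finset.coe_insert, Finset.coe_singleton,
      Set.mem_insert_iff, Set.mem_singleton_iff] at this
    rcases this with rfl | rfl
    · exact G.irrefl hz
    · exact hnadj hz
  set T : Set ℕ := {n | ∃ S : Finset U, Sep S ∧ S.card = n} with hT
  have hne : T.Nonempty := ⟨_, _, hSep0, rfl⟩
  obtain ⟨S, hS, hcard⟩ := Nat.sInf_mem hne
  obtain ⟨haS, hbS, hsep⟩ := hS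
  refine ⟨S, haS, hbS, hsep, ?_⟩
  intro x hx
  have herase : ¬ Sep (S.erase x) := by
    intro hS'
    have : sInf T ≤ (S.erase x).card := Nat.sInf_le ⟨_, hS', rfl⟩
    rw [Finset.card_erase_of_mem hx] at this
    have hpos : 0 < S.card := Finset.card_pos.mpr ⟨x, hx⟩
    omega
  have hreach : ReachWithin G ((↑(S.erase x) : Set U))ᶜ a b := by
    by_contra hr
    exact herase ⟨fun h => haS (Finset.mem_of_mem_erase h),
      fun h => hbS (Finset.mem_of_mem_erase h), hr⟩
  have hins : ((↑(S.erase x) : Set U))ᶜ = insert x ((↑S : Set U))ᶜ := by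
    ext z
    simp only [Set.mem_compl_iff, Finset.coe_erase, Set.mem_diff, Finset.mem_coe,
      Set.mem_insert_iff, Set.mem_singleton_iff]
    by_cases hzx : z = x
    · subst hzx; simp [hx]
    · simp [hzx]
  rw [hins] at hreach
  constructor
  · exact exists_adj_reachWithin (fun h => haS (h ▸ hx)) hsep hreach
  · exact exists_adj_reachWithin (fun h => hbS (h ▸ hx))
      (fun h => hsep h.symm) hreach.symm

end DiracMain

section DiracFinal

variable {U : Type*} [Fintype U] [DecidableEq U]

lemma separator_clique {G : SimpleGraph U} (hG : IsChordal G) {a b : U} {S : Finset U}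
    (hsep : ¬ ReachWithin G ((↑S : Set U))ᶜ a b)
    (hnbr : ∀ x ∈ S, (∃ u, G.Adj x u ∧ ReachWithin G ((↑S : Set U))ᶜ a u) ∧
                     (∃ u, G.Adj x u ∧ ReachWithin G ((↑S : Set U))ᶜ b u)) :
    ∀ x ∈ S, ∀ y ∈ S, x ≠ y → G.Adj x y := by
  intro x hx y hy hne
  by_contra hnadj
  set X : Set U := ((↑S : Set U))ᶜ with hX
  set A : Set U := {v | ReachWithin G X a v} with hA
  set B : Set U := {v | ReachWithin G X b v} with hB
  have hdisj : ∀ z, z ∈ A → z ∈ B → False := fun z hz1 hz2 => hsep (hz1.trans hz2.symm)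
  have hnoedge : ∀ u ∈ A, ∀ v ∈ B, ¬ G.Adj u v := by
    intro u hu v hv hadj
    exact hdisj v (hu.adj hadj hv.mem_right) hv
  -- build a path from x to y through A
  have hwalk : ∀ (c : U) (C : Set U), C = {v | ReachWithin G X c v} →
      (∃ u, G.Adj x u ∧ u ∈ C) → (∃ u, G.Adj y u ∧ u ∈ C) →
      ∃ p : G.Walk x y, p.IsPath ∧ (∀ z ∈ p.support, z ∈ C ∪ {x, y}) ∧
        ∀ u v, u ∈ p.support → v ∈ p.support → G.Adj u v → s(u, v) ∈ p.edges := by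
    rintro c C rfl ⟨a1, ha1, ha1C⟩ ⟨a2, ha2, ha2C⟩
    obtain ⟨w0, hw0⟩ := ha1C.symm.trans ha2C
    have hw0C : ∀ z ∈ w0.support, z ∈ {v | ReachWithin G X c v} :=
      fun z hz => ha1C.trans (reachWithin_of_mem_support hw0 hz)
    refine exists_min_path ⟨SimpleGraph.Walk.cons ha1 (w0.concat ha2.symm), ?_⟩
    intro z hz
    rw [SimpleGraph.Walk.support_cons, List.mem_cons] at hz
    rcases hz with rfl | hz
    · exact Or.inr (Or.inl rfl)
    · rw [SimpleGraph.Walk.support_concat, List.mem_append] at hz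
      rcases hz with hz | hz
      · exact Or.inl (hw0C z hz)
      · simp only [List.mem_singleton] at hz
        exact Or.inr (Or.inr (hz ▸ rfl))
  obtain ⟨p, hp, hpC, hpmin⟩ := hwalk a A rfl
    ⟨(hnbr x hx).1.choose, (hnbr x hx).1.choose_spec.1, (hnbr x hx).1.choose_spec.2⟩
    ⟨(hnbr y hy).1.choose, (hnbr y hy).1.choose_spec.1, (hnbr y hy).1.choose_spec.2⟩
  obtain ⟨q, hq, hqC, hqmin⟩ := hwalk b B rfl
    ⟨(hnbr x hx).2.choose, (hnbr x hx).2.choose_spec.1, (hnbr x hx).2.choose_spec.2⟩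
    ⟨(hnbr y hy).2.choose, (hnbr y hy).2.choose_spec.1, (hnbr y hy).2.choose_spec.2⟩
  have hAX : ∀ z ∈ A, z ∉ ({x, y} : Set U) := by
    rintro z hz (rfl | rfl)
    · exact hz.mem_right hx
    · exact hz.mem_right hy
  have hBX : ∀ z ∈ B, z ∉ ({x, y} : Set U) := by
    rintro z hz (rfl | rfl)
    · exact hz.mem_right hx
    · exact hz.mem_right hy
  have hint : ∀ z, z ∈ p.support → z ∈ q.support → z = x ∨ z = y := by
    intro z hzp hzq
    rcases hpC z hzp with hzA | hzxy
    · rcases hqC z hzq with hzB | hzxy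
      · exact absurd (hdisj z hzA hzB) (by simp)
      · exact hzxy
    · exact hzxy
  set cyc := p.append q.reverse with hcyc
  have hcycle : cyc.IsCycle := append_reverse_isCycle hp hq hne hnadj hint
  have hlen : 4 ≤ cyc.length := by
    rw [hcyc, SimpleGraph.Walk.length_append, SimpleGraph.Walk.length_reverse]
    have h1 := walk_length_two_of_ne_of_not_adj p hne hnadj
    have h2 := walk_length_two_of_ne_of_not_adj q hne hnadj
    omega
  obtain ⟨u, hu, v, hv, hadj, hedge⟩ := hG x cyc hcycle hlen
  rw [hcyc, SimpleGraph.Walk.mem_support_append_iff] at hu hv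
  have hqrev : ∀ {z : U}, z ∈ q.reverse.support ↔ z ∈ q.support := by
    intro z
    rw [SimpleGraph.Walk.support_reverse, List.mem_reverse]
  have hedgep : s(u, v) ∉ p.edges := by
    intro h
    exact hedge (by rw [hcyc, SimpleGraph.Walk.edges_append]; exact List.mem_append_left _ h)
  have hedgeq : s(u, v) ∉ q.edges := by
    intro h
    refine hedge ?_
    rw [hcyc, SimpleGraph.Walk.edges_append, SimpleGraph.Walk.edges_reverse]
    exact List.mem_append_right _ (List.mem_reverse.mpr h)
  by_cases hup : u ∈ p.support <;> by_cases hvp : v ∈ p.support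
  · exact hedgep (hpmin u v hup hvp hadj)
  · -- u ∈ p only, v ∈ q only
    have hvq : v ∈ q.support := hqrev.mp (hv.resolve_left hvp)
    by_cases huq : u ∈ q.support
    · exact hedgeq (hqmin u v huq hvq hadj)
    · have huA : u ∈ A := by
        rcases hpC u hup with h | h
        · exact h
        · rcases h with rfl | rfl
          · exact absurd q.start_mem_support huq
          · exact absurd q.end_mem_support huq
      have hvB : v ∈ B := by
        rcases hqC v hvq with h | h
        · exact h
        · rcases h with rfl | rfl
          · exact absurd p.start_mem_support hvp
          · exact absurd p.end_mem_support hvp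
      exact hnoedge u huA v hvB hadj
  · have huq : u ∈ q.support := hqrev.mp (hu.resolve_left hup)
    by_cases hvq : v ∈ q.support
    · exact hedgeq (hqmin u v huq hvq hadj)
    · have hvA : v ∈ A := by
        rcases hpC v hvp with h | h
        · exact h
        · rcases h with rfl | rfl
          · exact absurd q.start_mem_support hvq
          · exact absurd q.end_mem_support hvq
      have huB : u ∈ B := by
        rcases hqC u huq with h | h
        · exact h
        · rcases h with rfl | rfl
          · exact absurd p.start_mem_support hup
          · exact absurd p.end_mem_support hup
      exact hnoedge v hvA u huB hadj.symm
  · have huq : u ∈ q.support := hqrev.mp (hu.resolve_left hup)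
    have hvq : v ∈ q.support := hqrev.mp (hv.resolve_left hvp)
    exact hedgeq (hqmin u v huq hvq hadj)

end DiracFinal

section DiracTop

universe u

lemma exists_simplicial_in_component {n : ℕ}
    (IH : ∀ (W : Type u) [Fintype W] [DecidableEq W], Fintype.card W ≤ n →
      ∀ G : SimpleGraph W, IsChordal G →
        (∀ u v : W, u ≠ v → G.Adj u v) ∨
        ∃ v w, v ≠ w ∧ ¬ G.Adj v w ∧ IsSimplicialVtx G v ∧ IsSimplicialVtx G w)
    {V : Type u} [Fintype V] [DecidableEq V] (hn : Fintype.card V ≤ n + 1)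
    {G : SimpleGraph V} (hG : IsChordal G)
    {S : Finset V} (A : Set V) (hclique : ∀ x ∈ S, ∀ y ∈ S, x ≠ y → G.Adj x y)
    (hclosed : ∀ v ∈ A, ∀ u, G.Adj v u → u ∈ A ∨ u ∈ S)
    {a0 : V} (ha0 : a0 ∈ A) {b : V} (hbA : b ∉ A) (hbS : b ∉ S) :
    ∃ v ∈ A, IsSimplicialVtx G v := by
  classical
  set s : Set V := A ∪ ↑S with hs
  have hbs : b ∉ s := by
    rw [hs]
    rintro (h | h)
    · exact hbA h
    · exact hbS h
  haveI : Fintype ↥s := Fintype.ofFinite _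
  have hcard : Fintype.card ↥s ≤ n := by
    have hlt : Nat.card ↥s < Nat.card V := Finite.card_subtype_lt (p := (· ∈ s)) hbs
    rw [Nat.card_eq_fintype_card, Nat.card_eq_fintype_card] at hlt
    omega
  have hmem : ∀ v ∈ A, ∀ u, G.Adj v u → u ∈ s := by
    intro v hv u hadj
    rcases hclosed v hv u hadj with h | h
    · exact Or.inl h
    · exact Or.inr h
  have hlift : ∀ z : ↥s, (z : V) ∈ A → IsSimplicialVtx (G.induce s) z →
      IsSimplicialVtx G (z : V) := by
    intro z hzA hz p q hp hq hpq
    have hps : p ∈ s := hmem z hzA p hp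
    have hqs : q ∈ s := hmem z hzA q hq
    have := hz ⟨p, hps⟩ ⟨q, hqs⟩ hp hq (fun h => hpq (congrArg Subtype.val h))
    exact this
  rcases IH ↥s hcard (G.induce s) (hG.induce s) with hcomp | hsimp
  · refine ⟨a0, ha0, ?_⟩
    intro p q hp hq hpq
    have hps : p ∈ s := hmem a0 ha0 p hp
    have hqs : q ∈ s := hmem a0 ha0 q hq
    exact hcomp ⟨p, hps⟩ ⟨q, hqs⟩ (fun h => hpq (congrArg Subtype.val h))
  · obtain ⟨v, w, hvw, hnadj, hv, hw⟩ := hsimp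
    by_cases hvS : (v : V) ∈ S
    · have hwS : (w : V) ∉ S := by
        intro hwS
        exact hnadj (hclique v hvS w hwS (fun h => hvw (Subtype.ext h)))
      have hwA : (w : V) ∈ A := by
        rcases w.2 with h | h
        · exact h
        · exact absurd h hwS
      exact ⟨w, hwA, hlift w hwA hw⟩
    · have hvA : (v : V) ∈ A := by
        rcases v.2 with h | h
        · exact h
        · exact absurd h hvS
      exact ⟨v, hvA, hlift v hvA hv⟩

lemma dirac_main : ∀ (n : ℕ) (W : Type u) [Fintype W] [DecidableEq W],
    Fintype.card W ≤ n → ∀ (G : SimpleGraph W), IsChordal G →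
    (∀ u v : W, u ≠ v → G.Adj u v) ∨
    ∃ v w, v ≠ w ∧ ¬ G.Adj v w ∧ IsSimplicialVtx G v ∧ IsSimplicialVtx G w := by
  intro n
  induction n with
  | zero =>
    intro W _ _ hcard G hG
    left
    intro u
    have : IsEmpty W := Fintype.card_eq_zero_iff.mp (Nat.le_zero.mp hcard)
    exact (this.false u).elim
  | succ n IH =>
    intro W _ _ hcard G hG
    by_cases hcomp : ∀ u v : W, u ≠ v → G.Adj u v
    · exact Or.inl hcomp
    right
    push_neg at hcomp
    obtain ⟨a, b, hab, hnadj⟩ := hcomp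
    obtain ⟨S, haS, hbS, hsep, hnbr⟩ := exists_min_separator hab hnadj
    set X : Set W := ((↑S : Set W))ᶜ with hX
    set A : Set W := {v | ReachWithin G X a v} with hA
    set B : Set W := {v | ReachWithin G X b v} with hB
    have haA : a ∈ A := ReachWithin.refl haS
    have hbB : b ∈ B := ReachWithin.refl hbS
    have hdisj : ∀ z, z ∈ A → z ∈ B → False := fun z hz1 hz2 => hsep (hz1.trans hz2.symm)
    have hbA : b ∉ A := fun h => hsep h
    have haB : a ∉ B := fun h => hsep h.symm
    have hclique := separator_clique hG hsep hnbr
    have hclosedA : ∀ v ∈ A, ∀ u, G.Adj v u → u ∈ A ∨ u ∈ S := by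
      intro v hv u hadj
      by_cases huS : u ∈ S
      · exact Or.inr huS
      · exact Or.inl (hv.adj hadj huS)
    have hclosedB : ∀ v ∈ B, ∀ u, G.Adj v u → u ∈ B ∨ u ∈ S := by
      intro v hv u hadj
      by_cases huS : u ∈ S
      · exact Or.inr huS
      · exact Or.inl (hv.adj hadj huS)
    obtain ⟨va, hvaA, hva⟩ :=
      exists_simplicial_in_component IH hcard hG A hclique hclosedA haA hbA hbS
    obtain ⟨vb, hvbB, hvb⟩ :=
      exists_simplicial_in_component IH hcard hG B hclique hclosedB hbB haB haS
    refine ⟨va, vb, ?_, ?_, hva, hvb⟩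
    · rintro rfl
      exact hdisj va hvaA hvbB
    · intro hadj
      have hvbS : vb ∉ S := hvbB.mem_right
      rcases hclosedA va hvaA vb hadj with h | h
      · exact hdisj vb h hvbB
      · exact hvbS h

end DiracTop

/-- A chordal graph which is not complete has two non-adjacent simplicial
vertices. -/
theorem chordal_two_nonadjacent_simplicial (G : SimpleGraph V) (hG : IsChordal G)
    (hnc : ∃ u v : V, u ≠ v ∧ ¬ G.Adj u v) :
    ∃ v w : V, v ≠ w ∧ ¬ G.Adj v w ∧ IsSimplicialVtx G v ∧ IsSimplicialVtx G w := by
  obtain ⟨u, v, huv, hnadj⟩ := hnc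
  rcases dirac_main (Fintype.card V) V le_rfl G hG with h | h
  · exact absurd (h u v huv) hnadj
  · exact h
end

section
/- Let G be a chordal graph on n vertices with no isolated vertices. Then the noncover complex NC(G) is (n − iγ(G) − 1)-collapsible. -/
variable {V : Type*} [Fintype V] [DecidableEq V]

open Finset


section CollapseMachinery

variable {V : Type*} [Fintype V] [DecidableEq V]

lemma collapsible_powerset (d : ℕ) (t : Finset V) : Collapsible d t.powerset := by
  refine Relation.ReflTransGen.single ?_
  refine ⟨∅, ⟨Finset.mem_powerset.2 (Finset.empty_subset t), t,
    Finset.mem_powerset.2 le_rfl, Finset.empty_subset t, ?_⟩, by simp, ?_⟩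
  · intro ρ hρ _
    exact Finset.mem_powerset.1 hρ
  · rw [Finset.filter_false_of_mem]
    intro ρ _
    simp [Finset.empty_subset]

/-- lift one elementary collapse of the link to the cone. -/
lemma cone_step (del : Finset (Finset V)) (hdel : ∀ W ∈ del, u ∉ W)
    (L L' : Finset (Finset V)) (hL : ∀ F ∈ L, u ∉ F)
    (dl d : ℕ) (hd : dl + 1 ≤ d) (hstep : ElemCollapse dl L L') :
    ElemCollapse d (del ∪ L.image (fun F => insert u F))
      (del ∪ L'.image (fun F => insert u F)) := by
  classical
  obtain ⟨σ, ⟨hσL, τ, hτL, hστ, hmax⟩, hcard, hL'⟩ := hstep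
  have huσ : u ∉ σ := hL σ hσL
  refine ⟨insert u σ, ⟨?_, insert u τ, ?_, Finset.insert_subset_insert u hστ, ?_⟩, ?_, ?_⟩
  · exact Finset.mem_union_right _ (Finset.mem_image_of_mem _ hσL)
  · exact Finset.mem_union_right _ (Finset.mem_image_of_mem _ hτL)
  · intro ρ hρ hsub
    rcases Finset.mem_union.1 hρ with h | h
    · exact absurd (hsub (Finset.mem_insert_self u σ)) (hdel ρ h)
    · obtain ⟨F, hF, rfl⟩ := Finset.mem_image.1 h
      have huF : u ∉ F := hL F hF
      have hσF : σ ⊆ F := by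
        intro a ha
        have := hsub (Finset.mem_insert_of_mem ha)
        rcases Finset.mem_insert.1 this with rfl | h'
        · exact absurd ha huσ
        · exact h'
      exact Finset.insert_subset_insert u (hmax F hF hσF)
  · rw [Finset.card_insert_of_notMem huσ]
    omega
  · subst hL'
    ext ρ
    simp only [Finset.mem_filter, Finset.mem_union, Finset.mem_image]
    constructor
    · rintro (h | ⟨F, ⟨hF, hnsub⟩, rfl⟩)
      · refine ⟨Or.inl h, fun hsub => (hdel ρ h) (hsub (Finset.mem_insert_self u σ))⟩
      · refine ⟨Or.inr ⟨F, hF, rfl⟩, fun hsub => hnsub ?_⟩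
        intro a ha
        have := hsub (Finset.mem_insert_of_mem ha)
        rcases Finset.mem_insert.1 this with rfl | h'
        · exact absurd ha huσ
        · exact h'
    · rintro ⟨h | ⟨F, hF, rfl⟩, hnsub⟩
      · exact Or.inl h
      · refine Or.inr ⟨F, ⟨hF, fun hc => hnsub ?_⟩, rfl⟩
        exact Finset.insert_subset (Finset.mem_insert_self u F)
          (hc.trans (Finset.subset_insert u F))

/-- Lemma A : collapse the cone part over `u` following a collapse of the link,
then collapse the deletion. -/
lemma cone_collapse (K : Finset (Finset V)) (u : V) (dl d : ℕ) (hd : dl + 1 ≤ d)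
    (hlk : Relation.ReflTransGen (ElemCollapse dl)
      ((K.filter (fun W => u ∈ W)).image (fun W => W.erase u)) ∅)
    (hdel : Collapsible d (K.filter (fun W => u ∉ W))) :
    Collapsible d K := by
  classical
  set del := K.filter (fun W => u ∉ W) with hdeldef
  have hdelu : ∀ W ∈ del, u ∉ W := fun W hW => (Finset.mem_filter.1 hW).2
  have key : ∀ L : Finset (Finset V),
      Relation.ReflTransGen (ElemCollapse dl) L ∅ →
      (∀ F ∈ L, u ∉ F) →
      Relation.ReflTransGen (ElemCollapse d)
        (del ∪ L.image (fun F => insert u F)) del := by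
    intro L hRT
    induction hRT using Relation.ReflTransGen.head_induction_on with
    | refl => intro _; simpa using Relation.ReflTransGen.refl
    | @head L₁ L₂ hstep htail ih =>
        intro hL₁
        have hL₂ : ∀ F ∈ L₂, u ∉ F := by
          obtain ⟨σ, _, _, rfl⟩ := hstep
          intro F hF
          exact hL₁ F (Finset.mem_filter.1 hF).1
        exact Relation.ReflTransGen.head
          (cone_step del hdelu L₁ L₂ hL₁ dl d hd hstep) (ih hL₂)
  have hKdecomp : K = del ∪ ((K.filter (fun W => u ∈ W)).image
      (fun W => W.erase u)).image (fun F => insert u F) := by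
    ext W
    simp only [Finset.mem_union, Finset.mem_image, hdeldef, Finset.mem_filter]
    constructor
    · intro hW
      by_cases hu : u ∈ W
      · exact Or.inr ⟨W.erase u, ⟨W, ⟨hW, hu⟩, rfl⟩, Finset.insert_erase hu⟩
      · exact Or.inl ⟨hW, hu⟩
    · rintro (⟨hW, _⟩ | ⟨F, ⟨W', ⟨hW', hu'⟩, rfl⟩, rfl⟩)
      · exact hW
      · rwa [Finset.insert_erase hu']
  have hlku : ∀ F ∈ (K.filter (fun W => u ∈ W)).image (fun W => W.erase u), u ∉ F := by
    intro F hF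
    obtain ⟨W, _, rfl⟩ := Finset.mem_image.1 hF
    exact Finset.notMem_erase u W
  rw [hKdecomp]
  exact (key _ hlk hlku).trans hdel

end CollapseMachinery

section DualComplex

variable {V : Type*} [Fintype V] [DecidableEq V] (G : SimpleGraph V) [DecidableRel G.Adj]

/-- The Alexander-dual-style complex: noncovers of the graph restricted to `s`,
with marked vertices `B`. -/
def DD (s B : Finset V) : Finset (Finset V) :=
  s.powerset.filter fun W => ¬ IndepSet G (s \ W) ∨ ((s \ W) ∩ B).Nonempty

lemma mem_DD {s B W : Finset V} :
    W ∈ DD G s B ↔ W ⊆ s ∧ (¬ IndepSet G (s \ W) ∨ ((s \ W) ∩ B).Nonempty) := by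
  simp [DD, Finset.mem_filter, Finset.mem_powerset]

lemma indep_mono {I J : Finset V} (h : I ⊆ J) (hJ : IndepSet G J) : IndepSet G I :=
  fun u hu v hv => hJ u (h hu) v (h hv)

/-- `M` is a maximal independent subset of the ground set `g`. -/
def MaxIndepIn (g M : Finset V) : Prop :=
  M ⊆ g ∧ IndepSet G M ∧ ∀ x ∈ g, x ∉ M → ¬ IndepSet G (insert x M)

lemma exists_maxindep_extend (g I : Finset V) (hIg : I ⊆ g) (hI : IndepSet G I) :
    ∃ M, I ⊆ M ∧ MaxIndepIn G g M := by
  classical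
  have hne : (g.powerset.filter fun J => I ⊆ J ∧ IndepSet G J).Nonempty :=
    ⟨I, by simp [Finset.mem_filter, Finset.mem_powerset, hIg, hI]⟩
  obtain ⟨M, hM, hmax⟩ := Finset.exists_max_image _ Finset.card hne
  rw [Finset.mem_filter, Finset.mem_powerset] at hM
  obtain ⟨hMg, hIM, hMind⟩ := hM
  refine ⟨M, hIM, hMg, hMind, fun x hx hxM hind => ?_⟩
  have : (insert x M) ∈ g.powerset.filter fun J => I ⊆ J ∧ IndepSet G J := by
    rw [Finset.mem_filter, Finset.mem_powerset]
    exact ⟨Finset.insert_subset hx hMg, hIM.trans (Finset.subset_insert x M), hind⟩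
  have := hmax _ this
  rw [Finset.card_insert_of_notMem hxM] at this
  omega

lemma sdiff_insert_of_mem {s W : Finset V} {b : V} (hb : b ∈ W) :
    (s.erase b) \ (W.erase b) = s \ W := by
  ext z
  simp only [Finset.mem_sdiff, Finset.mem_erase]
  constructor
  · rintro ⟨⟨hzb, hzs⟩, hz⟩
    exact ⟨hzs, fun hzW => hz ⟨hzb, hzW⟩⟩
  · rintro ⟨hzs, hzW⟩
    have hzb : z ≠ b := fun h => hzW (h ▸ hb)
    exact ⟨⟨hzb, hzs⟩, fun h => hzW h.2⟩

/-- deletion of a marked vertex is a full simplex. -/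
lemma DD_del_marked {s B : Finset V} {b : V} (hbs : b ∈ s) (hbB : b ∈ B) :
    (DD G s B).filter (fun W => b ∉ W) = (s.erase b).powerset := by
  ext W
  simp only [Finset.mem_filter, mem_DD, Finset.mem_powerset, Finset.subset_erase]
  constructor
  · rintro ⟨⟨hWs, _⟩, hbW⟩
    exact ⟨hWs, hbW⟩
  · rintro ⟨hWs, hbW⟩
    refine ⟨⟨hWs, Or.inr ⟨b, ?_⟩⟩, hbW⟩
    simp [Finset.mem_inter, Finset.mem_sdiff, hbs, hbB, hbW]

/-- link of a marked vertex. -/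
lemma DD_lk_marked {s B : Finset V} {b : V} (hbs : b ∈ s) :
    ((DD G s B).filter (fun W => b ∈ W)).image (fun W => W.erase b)
      = DD G (s.erase b) (B.erase b) := by
  ext W'
  simp only [Finset.mem_image, Finset.mem_filter, mem_DD]
  constructor
  · rintro ⟨W, ⟨⟨hWs, hcond⟩, hbW⟩, rfl⟩
    have hdiff : (s.erase b) \ (W.erase b) = s \ W := sdiff_insert_of_mem hbW
    refine ⟨Finset.erase_subset_erase b hWs, ?_⟩
    rw [hdiff]
    rcases hcond with h | ⟨z, hz⟩
    · exact Or.inl h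
    · rw [Finset.mem_inter] at hz
      have hzb : z ≠ b := by
        rintro rfl
        exact (Finset.mem_sdiff.1 hz.1).2 hbW
      exact Or.inr ⟨z, Finset.mem_inter.2 ⟨hz.1, Finset.mem_erase.2 ⟨hzb, hz.2⟩⟩⟩
  · rintro ⟨hW's, hcond⟩
    have hbW' : b ∉ W' := fun h => (Finset.mem_erase.1 (hW's h)).1 rfl
    refine ⟨insert b W', ⟨⟨?_, ?_⟩, Finset.mem_insert_self b W'⟩, by
      rw [Finset.erase_insert hbW']⟩
    · exact Finset.insert_subset hbs ((hW's).trans (Finset.erase_subset b s))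
    · have hdiff : s \ (insert b W') = (s.erase b) \ W' := by
        ext z
        simp only [Finset.mem_sdiff, Finset.mem_insert, Finset.mem_erase, not_or]
        tauto
      rw [hdiff]
      rcases hcond with h | ⟨z, hz⟩
      · exact Or.inl h
      · rw [Finset.mem_inter] at hz
        exact Or.inr ⟨z, Finset.mem_inter.2 ⟨hz.1, (Finset.erase_subset b B) hz.2⟩⟩

/-- link of an ordinary vertex (no marks). -/
lemma DD_lk_plain {s : Finset V} {u : V} (hus : u ∈ s) :
    ((DD G s ∅).filter (fun W => u ∈ W)).image (fun W => W.erase u)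
      = DD G (s.erase u) ∅ := by
  have := DD_lk_marked G (B := (∅ : Finset V)) hus
  rwa [Finset.erase_empty] at this

/-- deletion of an ordinary vertex: marks appear on its neighborhood. -/
lemma DD_del_plain {s : Finset V} {u : V} (hus : u ∈ s) :
    (DD G s ∅).filter (fun W => u ∉ W)
      = DD G (s.erase u) ((s.erase u).filter (G.Adj u)) := by
  have key : ∀ W : Finset V, W ⊆ s → u ∉ W →
      (¬ IndepSet G (s \ W) ↔
        (¬ IndepSet G ((s.erase u) \ W) ∨
          (((s.erase u) \ W) ∩ ((s.erase u).filter (G.Adj u))).Nonempty)) := by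
    intro W hWs huW
    have hsub : (s.erase u) \ W ⊆ s \ W :=
      Finset.sdiff_subset_sdiff (Finset.erase_subset u s) le_rfl
    constructor
    · intro hcond
      rw [IndepSet] at hcond
      push_neg at hcond
      obtain ⟨a, ha, b, hb, hab⟩ := hcond
      have hmem : ∀ z, z ∈ s \ W → z ≠ u → z ∈ (s.erase u) \ W := by
        intro z hz hzu
        rw [Finset.mem_sdiff] at hz ⊢
        exact ⟨Finset.mem_erase.2 ⟨hzu, hz.1⟩, hz.2⟩
      by_cases hau : a = u
      · have hbu : b ≠ u := fun h => G.irrefl (hau ▸ h ▸ hab)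
        refine Or.inr ⟨b, Finset.mem_inter.2 ⟨hmem b hb hbu, ?_⟩⟩
        rw [Finset.mem_filter]
        exact ⟨Finset.mem_erase.2 ⟨hbu, (Finset.mem_sdiff.1 hb).1⟩, hau ▸ hab⟩
      · by_cases hbu : b = u
        · refine Or.inr ⟨a, Finset.mem_inter.2 ⟨hmem a ha hau, ?_⟩⟩
          rw [Finset.mem_filter]
          exact ⟨Finset.mem_erase.2 ⟨hau, (Finset.mem_sdiff.1 ha).1⟩, hbu ▸ hab.symm⟩
        · exact Or.inl (fun hind => hind a (hmem a ha hau) b (hmem b hb hbu) hab)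
    · rintro (h | ⟨z, hz⟩)
      · intro hind
        exact h (indep_mono G hsub hind)
      · rw [Finset.mem_inter, Finset.mem_filter] at hz
        obtain ⟨hz1, _, hz3⟩ := hz
        intro hind
        exact hind u (Finset.mem_sdiff.2 ⟨hus, huW⟩) z (hsub hz1) hz3
  ext W
  simp only [Finset.mem_filter, mem_DD, Finset.inter_empty,
    Finset.not_nonempty_empty, or_false]
  constructor
  · rintro ⟨⟨hWs, hcond⟩, huW⟩
    exact ⟨Finset.subset_erase.2 ⟨hWs, huW⟩, (key W hWs huW).1 hcond⟩
  · rintro ⟨hWs', hcond⟩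
    obtain ⟨hWs, huW⟩ := Finset.subset_erase.1 hWs'
    exact ⟨⟨hWs, (key W hWs huW).2 hcond⟩, huW⟩

end DualComplex

section MainInduction

variable {V : Type*} [Fintype V] [DecidableEq V] (G : SimpleGraph V) [DecidableRel G.Adj]

lemma indep_empty : IndepSet G (∅ : Finset V) :=
  fun u hu => absurd hu (Finset.notMem_empty u)

lemma indep_singleton (x : V) : IndepSet G ({x} : Finset V) := by
  intro u hu v hv h
  rw [Finset.mem_singleton] at hu hv
  subst hu; subst hv
  exact G.irrefl h

lemma DD_no_edge {s : Finset V} (h : ∀ x ∈ s, ∀ y ∈ s, ¬ G.Adj x y) :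
    DD G s ∅ = ∅ := by
  ext W
  simp only [mem_DD, Finset.inter_empty, Finset.not_nonempty_empty, or_false,
    Finset.notMem_empty, iff_false, not_and]
  intro _ hni
  exact hni (fun u hu v hv =>
    h u ((Finset.sdiff_subset) hu) v ((Finset.sdiff_subset) hv))

lemma erase_sdiff_erase {s B : Finset V} {b : V} (hbB : b ∈ B) :
    (s.erase b) \ (B.erase b) = s \ B := by
  ext z
  simp only [Finset.mem_sdiff, Finset.mem_erase]
  constructor
  · rintro ⟨⟨hzb, hzs⟩, h⟩
    exact ⟨hzs, fun hzB => h ⟨hzb, hzB⟩⟩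
  · rintro ⟨hzs, hzB⟩
    exact ⟨⟨fun h => hzB (h ▸ hbB), hzs⟩, fun h => hzB h.2⟩

/-- The main induction: the marked noncover complex `DD G s B` is `d`-collapsible
provided every maximal independent subset `M` of `s \ B` satisfies
`s.card ≤ M.card + d + 1`. -/
lemma GM
    (hpair : ∀ s : Finset V, (∃ x ∈ s, ∃ y ∈ s, G.Adj x y) →
      ∃ v u, v ∈ s ∧ u ∈ s ∧ G.Adj v u ∧ ∀ w ∈ s, G.Adj v w → w = u ∨ G.Adj u w) :
    ∀ (n : ℕ) (s B : Finset V), s.card ≤ n → B ⊆ s → ∀ d : ℕ,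
    (∀ M, MaxIndepIn G (s \ B) M → s.card ≤ M.card + d + 1) →
    Collapsible d (DD G s B) := by
  intro n
  induction n with
  | zero =>
      intro s B hsn hBs d _
      have hs : s = ∅ := Finset.card_eq_zero.1 (Nat.le_zero.1 hsn)
      subst hs
      have hB : B = ∅ := Finset.subset_empty.1 hBs
      subst hB
      rw [DD_no_edge G (by simp)]
      exact Relation.ReflTransGen.refl
  | succ n ih =>
      intro s B hsn hBs d hHF
      by_cases hB : B.Nonempty
      · obtain ⟨b, hbB⟩ := hB
        have hbs : b ∈ s := hBs hbB
        have hscard : 1 ≤ s.card := Finset.card_pos.2 ⟨b, hbs⟩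
        rcases d with _ | d'
        · -- d = 0, marked vertex exists
          obtain ⟨M, -, hM⟩ := exists_maxindep_extend G (s \ B) ∅
            (Finset.empty_subset _) (indep_empty G)
          have h1 := hHF M hM
          have h2 : M.card ≤ (s \ B).card := Finset.card_le_card hM.1
          have h3 : (s \ B).card = s.card - B.card := Finset.card_sdiff_of_subset hBs
          have hBcard : B.card = 1 := by
            have := Finset.card_pos.2 ⟨b, hbB⟩
            have hBs' := Finset.card_le_card hBs
            omega
          have hBsing : B = {b} := by
            obtain ⟨c, hc⟩ := Finset.card_eq_one.1 hBcard
            subst hc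
            rw [Finset.mem_singleton] at hbB
            subst hbB
            rfl
          subst hBsing
          have hMsub : M ⊆ s.erase b := by
            intro z hz
            have := hM.1 hz
            rw [Finset.mem_sdiff, Finset.mem_singleton] at this
            exact Finset.mem_erase.2 ⟨this.2, this.1⟩
          have hMeq : M = s.erase b := by
            apply Finset.eq_of_subset_of_card_le hMsub
            rw [Finset.card_erase_of_mem hbs]
            omega
          have hindep : IndepSet G (s.erase b) := hMeq ▸ hM.2.1
          have : DD G s {b} = (s.erase b).powerset := by
            ext W
            rw [mem_DD, Finset.mem_powerset, Finset.subset_erase]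
            by_cases hbW : b ∈ W
            · simp only [hbW, not_true_eq_false, and_false, iff_false, not_and, not_or]
              intro hWs
              constructor
              · rw [not_not]
                refine indep_mono G ?_ hindep
                intro z hz
                rw [Finset.mem_sdiff] at hz
                exact Finset.mem_erase.2 ⟨fun h => hz.2 (h ▸ hbW), hz.1⟩
              · rw [Finset.not_nonempty_iff_eq_empty]
                ext z
                simp only [Finset.mem_inter, Finset.mem_sdiff, Finset.mem_singleton,
                  Finset.notMem_empty, iff_false, not_and]
                rintro ⟨_, hzW⟩ rfl
                exact hzW hbW
            · simp only [hbW, not_false_eq_true, and_true]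
              constructor
              · rintro ⟨hWs, _⟩
                exact hWs
              · intro hWs
                refine ⟨hWs, Or.inr ⟨b, ?_⟩⟩
                simp [Finset.mem_inter, Finset.mem_sdiff, hbs, hbW]
          rw [this]
          exact collapsible_powerset _ _
        · -- d = d' + 1 : peel the marked vertex b
          apply cone_collapse (DD G s B) b d' (d' + 1) le_rfl
          · rw [DD_lk_marked G hbs]
            apply ih (s.erase b) (B.erase b)
              (by rw [Finset.card_erase_of_mem hbs]; omega)
              (Finset.erase_subset_erase b hBs) d'
            intro M hM
            rw [erase_sdiff_erase hbB] at hM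
            have := hHF M hM
            rw [Finset.card_erase_of_mem hbs]
            omega
          · rw [DD_del_marked G hbs hbB]
            exact collapsible_powerset _ _
      · have hBe : B = ∅ := Finset.not_nonempty_iff_eq_empty.1 hB
        subst hBe
        by_cases hE : ∃ x ∈ s, ∃ y ∈ s, G.Adj x y
        · obtain ⟨x, hxs, y, hys, hxy⟩ := hE
          rcases d with _ | d'
          · -- d = 0 with an edge: the edge is unique and DD is a simplex
            have herase : ∀ p q : V, p ∈ s → q ∈ s → G.Adj p q →
                IndepSet G (s.erase q) := by
              intro p q hps hqs hpq
              obtain ⟨M, hpM, hM⟩ := exists_maxindep_extend G (s \ ∅) {p}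
                (by rw [Finset.sdiff_empty]; exact Finset.singleton_subset_iff.2 hps)
                (indep_singleton G p)
              have h1 := hHF M hM
              have hqM : q ∉ M := by
                intro hqM
                exact hM.2.1 p (hpM (Finset.mem_singleton_self p)) q hqM hpq
              have hMsub : M ⊆ s.erase q := by
                intro z hz
                have := hM.1 hz
                rw [Finset.sdiff_empty] at this
                exact Finset.mem_erase.2 ⟨fun h => hqM (h ▸ hz), this⟩
              have hMeq : M = s.erase q := by
                apply Finset.eq_of_subset_of_card_le hMsub
                rw [Finset.card_erase_of_mem hqs]
                omega
              exact hMeq ▸ hM.2.1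
            have hiy : IndepSet G (s.erase y) := herase x y hxs hys hxy
            have hix : IndepSet G (s.erase x) := herase y x hys hxs hxy.symm
            have : DD G s ∅ = ((s.erase x).erase y).powerset := by
              ext W
              rw [mem_DD, Finset.mem_powerset, Finset.subset_erase, Finset.subset_erase]
              simp only [Finset.inter_empty, Finset.not_nonempty_empty, or_false]
              by_cases hxW : x ∈ W
              · simp only [hxW, not_true_eq_false, and_false, false_and, iff_false, not_and]
                intro hWs
                rw [not_not]
                refine indep_mono G ?_ hix
                intro z hz
                rw [Finset.mem_sdiff] at hz
                exact Finset.mem_erase.2 ⟨fun h => hz.2 (h ▸ hxW), hz.1⟩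
              · by_cases hyW : y ∈ W
                · simp only [hyW, not_true_eq_false, and_false, iff_false, not_and]
                  intro hWs
                  rw [not_not]
                  refine indep_mono G ?_ hiy
                  intro z hz
                  rw [Finset.mem_sdiff] at hz
                  exact Finset.mem_erase.2 ⟨fun h => hz.2 (h ▸ hyW), hz.1⟩
                · simp only [hxW, hyW, not_false_eq_true, and_true]
                  constructor
                  · rintro ⟨hWs, _⟩
                    exact hWs
                  · intro hWs
                    refine ⟨hWs, fun hind => ?_⟩
                    exact hind x (Finset.mem_sdiff.2 ⟨hxs, hxW⟩)
                      y (Finset.mem_sdiff.2 ⟨hys, hyW⟩) hxy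
            rw [this]
            exact collapsible_powerset _ _
          · -- d = d' + 1 : shed at a dominated pair (v,u)
            obtain ⟨v, u, hvs, hus, hvu, hN⟩ := hpair s ⟨x, hxs, y, hys, hxy⟩
            have hscard : 1 ≤ s.card := Finset.card_pos.2 ⟨u, hus⟩
            apply cone_collapse (DD G s ∅) u d' (d' + 1) le_rfl
            · rw [DD_lk_plain G hus]
              apply ih (s.erase u) ∅
                (by rw [Finset.card_erase_of_mem hus]; omega)
                (Finset.empty_subset _) d'
              intro M hM
              rw [Finset.sdiff_empty] at hM
              have hMs : MaxIndepIn G (s \ ∅) M := by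
                rw [Finset.sdiff_empty]
                refine ⟨hM.1.trans (Finset.erase_subset u s), hM.2.1, ?_⟩
                intro z hzs hzM hind
                by_cases hzu : z = u
                · have hindu : IndepSet G (insert u M) := hzu ▸ hind
                  have hvM : v ∉ M := fun hvM => hindu u (Finset.mem_insert_self u M)
                    v (Finset.mem_insert_of_mem hvM) hvu.symm
                  have hvne : v ≠ u := G.ne_of_adj hvu
                  have hindv : IndepSet G (insert v M) := by
                    intro a ha b hb hab
                    rcases Finset.mem_insert.1 ha with rfl | haM
                    · rcases Finset.mem_insert.1 hb with rfl | hbM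
                      · exact G.irrefl hab
                      · have hbs' : b ∈ s := (Finset.mem_erase.1 (hM.1 hbM)).2
                        rcases hN b hbs' hab with rfl | hub
                        · exact (Finset.mem_erase.1 (hM.1 hbM)).1 rfl
                        · exact hindu u (Finset.mem_insert_self u M)
                            b (Finset.mem_insert_of_mem hbM) hub
                    · rcases Finset.mem_insert.1 hb with rfl | hbM
                      · have has' : a ∈ s := (Finset.mem_erase.1 (hM.1 haM)).2
                        rcases hN a has' hab.symm with rfl | hua
                        · exact (Finset.mem_erase.1 (hM.1 haM)).1 rfl
                        · exact hindu u (Finset.mem_insert_self u M)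
                            a (Finset.mem_insert_of_mem haM) hua
                      · exact hM.2.1 a haM b hbM hab
                  exact hM.2.2 v (Finset.mem_erase.2 ⟨hvne, hvs⟩) hvM hindv
                · exact hM.2.2 z (Finset.mem_erase.2 ⟨hzu, hzs⟩) hzM hind
              have := hHF M hMs
              rw [Finset.card_erase_of_mem hus]
              omega
            · rw [DD_del_plain G hus]
              apply ih (s.erase u) ((s.erase u).filter (G.Adj u))
                (by rw [Finset.card_erase_of_mem hus]; omega)
                (Finset.filter_subset _ _) (d' + 1)
              intro M hM
              have huM : u ∉ M := by
                intro huM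
                have := hM.1 huM
                rw [Finset.mem_sdiff] at this
                exact (Finset.mem_erase.1 this.1).1 rfl
              have hMs : MaxIndepIn G (s \ ∅) (insert u M) := by
                rw [Finset.sdiff_empty]
                have hMsub : M ⊆ s := by
                  intro z hz
                  exact (Finset.mem_erase.1 (Finset.mem_sdiff.1 (hM.1 hz)).1).2
                refine ⟨Finset.insert_subset hus hMsub, ?_, ?_⟩
                · intro a ha b hb hab
                  rcases Finset.mem_insert.1 ha with rfl | haM
                  · rcases Finset.mem_insert.1 hb with rfl | hbM
                    · exact G.irrefl hab
                    · have := hM.1 hbM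
                      rw [Finset.mem_sdiff, Finset.mem_filter] at this
                      exact this.2 ⟨this.1, hab⟩
                  · rcases Finset.mem_insert.1 hb with rfl | hbM
                    · have := hM.1 haM
                      rw [Finset.mem_sdiff, Finset.mem_filter] at this
                      exact this.2 ⟨this.1, hab.symm⟩
                    · exact hM.2.1 a haM b hbM hab
                · intro z hzs hzM hind
                  have hzu : z ≠ u := fun h => hzM (h ▸ Finset.mem_insert_self u M)
                  have hzM' : z ∉ M := fun h => hzM (Finset.mem_insert_of_mem h)
                  have hindzM : IndepSet G (insert z M) :=
                    indep_mono G (Finset.insert_subset_insert z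
                      (Finset.subset_insert u M)) hind
                  have hnadj : ¬ G.Adj u z := hind u
                    (Finset.mem_insert_of_mem (Finset.mem_insert_self u M))
                    z (Finset.mem_insert_self z _)
                  refine hM.2.2 z ?_ hzM' hindzM
                  rw [Finset.mem_sdiff, Finset.mem_filter]
                  exact ⟨Finset.mem_erase.2 ⟨hzu, hzs⟩, fun h => hnadj h.2⟩
              have := hHF _ hMs
              rw [Finset.card_insert_of_notMem huM] at this
              rw [Finset.card_erase_of_mem hus]
              omega
        · push_neg at hE
          rw [DD_no_edge G hE]
          exact Relation.ReflTransGen.refl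

end MainInduction

section Paths

variable {V : Type*} [DecidableEq V] {G : SimpleGraph V}

lemma chain'_adj {l : List V} (h : l.Chain' G.Adj) {i : ℕ} (hi : i + 1 < l.length) :
    G.Adj (l[i]'(by omega)) (l[i+1]'hi) := by
  have := List.isChain_iff_getElem.1 h i (by omega)
  simpa using this

/-- the walk along a chain list from index `i` to index `j`. -/
def walkSeg (l : List V) (hc : l.Chain' G.Adj) : (i j : ℕ) → (hij : i ≤ j) → (hj : j < l.length) →
    G.Walk (l[i]'(by omega)) (l[j]'hj)
  | i, j, hij, hj =>
    if h : i = j then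
      ((SimpleGraph.Walk.nil : G.Walk (l[j]'hj) (l[j]'hj)).copy (by subst h; rfl) rfl)
    else
      SimpleGraph.Walk.cons (chain'_adj hc (by omega))
        ((walkSeg l hc (i+1) j (by omega) hj).copy rfl rfl)
  termination_by i j _ _ => j - i
  decreasing_by omega

lemma walkSeg_support (l : List V) (hc : l.Chain' G.Adj) {j : ℕ} (hj : j < l.length) :
    ∀ (n i : ℕ) (hij : i ≤ j), j - i = n →
    (walkSeg l hc i j hij hj).support = (l.drop i).take (j + 1 - i) := by
  intro n
  induction n with
  | zero =>
      intro i hij hd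
      have hij' : i = j := by omega
      rw [walkSeg, dif_pos hij']
      subst hij'
      simp only [SimpleGraph.Walk.support_copy, SimpleGraph.Walk.support_nil]
      rw [List.drop_eq_getElem_cons hj]
      rw [show i + 1 - i = 0 + 1 by omega, List.take_succ_cons, List.take_zero]
  | succ k ihk =>
      intro i hij hd
      have hne : ¬ i = j := by omega
      rw [walkSeg, dif_neg hne]
      simp only [SimpleGraph.Walk.support_cons, SimpleGraph.Walk.support_copy]
      rw [ihk (i+1) (by omega) (by omega)]
      rw [List.drop_eq_getElem_cons (show i < l.length by omega)]
      have : j + 1 - i = (j + 1 - (i+1)) + 1 := by omega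
      rw [this, List.take_succ_cons]

lemma walkSeg_length (l : List V) (hc : l.Chain' G.Adj) {j : ℕ} (hj : j < l.length) :
    ∀ (n i : ℕ) (hij : i ≤ j), j - i = n →
    (walkSeg l hc i j hij hj).length = j - i := by
  intro n
  induction n with
  | zero =>
      intro i hij hd
      have hij' : i = j := by omega
      rw [walkSeg, dif_pos hij']
      subst hij'
      simp
  | succ k ihk =>
      intro i hij hd
      have hne : ¬ i = j := by omega
      rw [walkSeg, dif_neg hne]
      simp only [SimpleGraph.Walk.length_cons, SimpleGraph.Walk.length_copy]
      rw [ihk (i+1) (by omega) (by omega)]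
      omega

lemma walkSeg_edge (l : List V) (hc : l.Chain' G.Adj) {j : ℕ} (hj : j < l.length) :
    ∀ (n i : ℕ) (hij : i ≤ j), j - i = n → ∀ (k : ℕ) (hik : i ≤ k) (hkj : k < j),
    s((l[k]'(by omega)), (l[k+1]'(by omega))) ∈ (walkSeg l hc i j hij hj).edges := by
  intro n
  induction n with
  | zero => intro i hij hd k hik hkj; omega
  | succ m ihm =>
      intro i hij hd k hik hkj
      have hne : ¬ i = j := by omega
      rw [walkSeg, dif_neg hne]
      simp only [SimpleGraph.Walk.edges_cons, SimpleGraph.Walk.edges_copy]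
      by_cases hki : k = i
      · subst hki
        exact List.mem_cons_self
      · exact List.mem_cons_of_mem _ (ihm (i+1) (by omega) (by omega) k (by omega) hkj)

end Paths

section PairLemma

variable {V : Type*} [Fintype V] [DecidableEq V]

/-- induced path within `s`, encoded by indices. -/
def IsIP (G : SimpleGraph V) (s : Finset V) (l : List V) : Prop :=
  l.Nodup ∧ (∀ x ∈ l, x ∈ s) ∧ l.Chain' G.Adj ∧
    ∀ (i j : ℕ) (hj : j < l.length) (_ : i + 2 ≤ j), ¬ G.Adj (l[i]'(by omega)) (l[j]'hj)

lemma chordal_pair (G : SimpleGraph V) [DecidableRel G.Adj] (hG : IsChordal G) :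
    ∀ s : Finset V, (∃ x ∈ s, ∃ y ∈ s, G.Adj x y) →
      ∃ v u, v ∈ s ∧ u ∈ s ∧ G.Adj v u ∧ ∀ w ∈ s, G.Adj v w → w = u ∨ G.Adj u w := by
  classical
  rintro s ⟨x, hxs, y, hys, hxy⟩
  set P : ℕ → Prop := fun k => ∃ l : List V, IsIP G s l ∧ l.length = k with hPdef
  have hP2 : P 2 := by
    refine ⟨[x, y], ⟨?_, ?_, ?_, ?_⟩, rfl⟩
    · simp [G.ne_of_adj hxy]
    · intro z hz
      rcases List.mem_cons.1 hz with rfl | hz'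
      · exact hxs
      · rcases List.mem_singleton.1 hz' with rfl
        exact hys
    · simp [List.Chain', hxy]
    · intro i j hj h2
      simp only [List.length_cons, List.length_nil] at hj
      omega
  have hbound : ∀ k, P k → k ≤ Fintype.card V := by
    rintro k ⟨l, hl, rfl⟩
    exact hl.1.length_le_card
  set m := Nat.findGreatest P (Fintype.card V) with hmdef
  have hPm : P m := Nat.findGreatest_spec (hbound 2 hP2) hP2
  have hmax : ∀ k, P k → k ≤ m := fun k hk => Nat.le_findGreatest (hbound k hk) hk
  obtain ⟨l, hl, hlen⟩ := hPm
  have hm2 : 2 ≤ m := hmax 2 hP2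
  have h0 : 0 < l.length := by omega
  have h1 : 1 < l.length := by omega
  refine ⟨l[0], l[1], hl.2.1 _ (l.getElem_mem h0), hl.2.1 _ (l.getElem_mem h1),
    chain'_adj hl.2.2.1 h1, ?_⟩
  intro w hws hadj
  by_contra hcon
  push_neg at hcon
  obtain ⟨hwu, hwadj⟩ := hcon
  by_cases hwl : w ∈ l
  · obtain ⟨k, hk, hkw⟩ := List.mem_iff_getElem.1 hwl
    rcases k with _ | _ | k''
    · exact G.irrefl (hkw ▸ hadj)
    · exact hwu hkw.symm
    · rw [← hkw] at hadj
      exact hl.2.2.2 0 (k''+2) hk (by omega) hadj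
  · by_cases hcyc : ∃ k : ℕ, 2 ≤ k ∧ ∃ hk : k < l.length, G.Adj w (l[k]'hk)
    · obtain ⟨hk₀2, hk0len, hk₀adj⟩ := Nat.find_spec hcyc
      set k₀ := Nat.find hcyc with hk₀def
      set pth := walkSeg l hl.2.2.1 0 k₀ (Nat.zero_le _) hk0len with hpthdef
      set q := pth.concat hk₀adj.symm with hqdef
      set cyc := SimpleGraph.Walk.cons hadj.symm q with hcycdef
      have hsup : pth.support = l.take (k₀ + 1) := by
        rw [hpthdef, walkSeg_support l hl.2.2.1 hk0len (k₀ - 0) 0 (Nat.zero_le _) rfl]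
        rw [List.drop_zero]
        norm_num
      have hwnotin : w ∉ l.take (k₀+1) := fun h => hwl ((List.take_sublist _ _).mem h)
      have hpathnodup : (l.take (k₀+1)).Nodup := (List.take_sublist _ _).nodup hl.1
      have hcyccyc : cyc.IsCycle := by
        rw [hcycdef, SimpleGraph.Walk.cons_isCycle_iff]
        constructor
        · rw [SimpleGraph.Walk.isPath_def, hqdef, SimpleGraph.Walk.support_concat, hsup]
          rw [List.nodup_append]
          refine ⟨hpathnodup, List.nodup_singleton w, ?_⟩
          intro a ha b hb hab
          rw [List.mem_singleton] at hb
          rw [hab, hb] at ha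
          exact hwnotin ha
        · rw [hqdef, SimpleGraph.Walk.edges_concat, List.concat_eq_append]
          intro hmem
          rcases List.mem_append.1 hmem with hmem | hmem
          · have := SimpleGraph.Walk.fst_mem_support_of_mem_edges pth hmem
            rw [hsup] at this
            exact hwnotin this
          · rw [List.mem_singleton] at hmem
            rcases Sym2.eq_iff.1 hmem with ⟨h1, h2⟩ | ⟨h1, h2⟩
            · exact hwl (h1 ▸ l.getElem_mem hk0len)
            · have := (hl.1.getElem_inj_iff).1 h2
              omega
      have hlen4 : 4 ≤ cyc.length := by
        have hL := walkSeg_length l hl.2.2.1 hk0len (k₀ - 0) 0 (Nat.zero_le _) rfl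
        rw [hcycdef, SimpleGraph.Walk.length_cons, hqdef, SimpleGraph.Walk.length_concat]
        rw [← hpthdef] at hL
        omega
      obtain ⟨c1, hc1, c2, hc2, hcadj, hcne⟩ := hG w cyc hcyccyc hlen4
      have hsupc : ∀ c, c ∈ cyc.support →
          c = w ∨ ∃ (i : ℕ) (hi : i < l.length), i ≤ k₀ ∧ c = l[i] := by
        intro c hc
        rw [hcycdef, SimpleGraph.Walk.support_cons, hqdef,
          SimpleGraph.Walk.support_concat, hsup] at hc
        simp only [List.mem_cons, List.concat_eq_append, List.mem_append,
          List.mem_singleton] at hc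
        rcases hc with rfl | hc | rfl | h'
        case inr.inr.inr => exact absurd h' List.not_mem_nil
        · exact Or.inl rfl
        · right
          obtain ⟨i, hi, hci⟩ := List.mem_iff_getElem.1 hc
          rw [List.length_take] at hi
          have hi1 : i < l.length := lt_of_lt_of_le hi (min_le_right _ _)
          have hi2 : i < k₀ + 1 := lt_of_lt_of_le hi (min_le_left _ _)
          refine ⟨i, hi1, by omega, ?_⟩
          rw [← hci, List.getElem_take]
        · exact Or.inl rfl
      have hedge0 : s(w, l[0]'h0) ∈ cyc.edges := by
        rw [hcycdef, SimpleGraph.Walk.edges_cons]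
        exact List.mem_cons_self
      have hedgek : s((l[k₀]'hk0len), w) ∈ cyc.edges := by
        rw [hcycdef, SimpleGraph.Walk.edges_cons, hqdef, SimpleGraph.Walk.edges_concat,
          List.concat_eq_append]
        exact List.mem_cons_of_mem _ (List.mem_append_right _ (List.mem_singleton.2 rfl))
      have hedgecons : ∀ (i : ℕ) (hi : i + 1 ≤ k₀),
          s((l[i]'(by omega)), (l[i+1]'(by omega))) ∈ cyc.edges := by
        intro i hi
        have hmem := walkSeg_edge l hl.2.2.1 hk0len (k₀ - 0) 0 (Nat.zero_le _) rfl
          i (Nat.zero_le _) (by omega)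
        rw [hcycdef, SimpleGraph.Walk.edges_cons, hqdef, SimpleGraph.Walk.edges_concat,
          List.concat_eq_append]
        exact List.mem_cons_of_mem _ (List.mem_append_left _ hmem)
      have hwcase : ∀ (i : ℕ) (hi : i < l.length), i ≤ k₀ → G.Adj w (l[i]'hi) →
          s(w, (l[i]'hi)) ∈ cyc.edges := by
        intro i hi hik hadji
        rcases i with _ | _ | i'
        · exact hedge0
        · exact absurd hadji (fun h => hwadj h.symm)
        · by_cases hik0 : i' + 2 = k₀
          · have hEq : (l[i'+2]'hi) = (l[k₀]'hk0len) := by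
              congr 1
            rw [Sym2.eq_swap, hEq]
            exact hedgek
          · exfalso
            exact Nat.find_min hcyc (show i'+2 < k₀ by omega) ⟨by omega, hi, hadji⟩
      rcases hsupc c1 hc1 with rfl | ⟨i1, hi1, hik1, rfl⟩
      · rcases hsupc c2 hc2 with rfl | ⟨i2, hi2, hik2, rfl⟩
        · exact G.irrefl hcadj
        · exact hcne (hwcase i2 hi2 hik2 hcadj)
      · rcases hsupc c2 hc2 with rfl | ⟨i2, hi2, hik2, rfl⟩
        · refine hcne ?_
          rw [Sym2.eq_swap]
          exact hwcase i1 hi1 hik1 hcadj.symm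
        · have hne12 : i1 ≠ i2 := by
            intro h
            subst h
            exact G.irrefl hcadj
          rcases Nat.lt_or_ge i1 i2 with hlt | hge
          · rcases Nat.eq_or_lt_of_le (Nat.succ_le_of_lt hlt) with heq | hlt2
            · exact hcne (heq ▸ hedgecons i1 (by omega))
            · exact absurd hcadj (hl.2.2.2 i1 i2 hi2 (by omega))
          · have hlt : i2 < i1 := by omega
            rcases Nat.eq_or_lt_of_le (Nat.succ_le_of_lt hlt) with heq | hlt2
            · refine hcne ?_
              rw [Sym2.eq_swap]
              exact heq ▸ hedgecons i2 (by omega)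
            · exact absurd hcadj.symm (hl.2.2.2 i2 i1 hi1 (by omega))
    · push_neg at hcyc
      have hPext : P (l.length + 1) := by
        refine ⟨w :: l, ⟨?_, ?_, ?_, ?_⟩, by simp⟩
        · exact List.nodup_cons.2 ⟨hwl, hl.1⟩
        · intro z hz
          rcases List.mem_cons.1 hz with rfl | hz'
          · exact hws
          · exact hl.2.1 z hz'
        · rw [List.Chain', List.isChain_cons]
          refine ⟨?_, hl.2.2.1⟩
          intro b hb
          rw [List.head?_eq_getElem?, List.getElem?_eq_getElem h0, Option.mem_some_iff] at hb
          subst hb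
          exact hadj.symm
        · intro i j hj h2
          rcases j with _ | j'
          · omega
          · rcases i with _ | i'
            · simp only [List.getElem_cons_zero, List.getElem_cons_succ]
              simp only [List.length_cons] at hj
              rcases Nat.lt_or_ge j' 2 with hj2 | hj2
              · have : j' = 1 := by omega
                subst this
                exact fun h => hwadj h.symm
              · exact hcyc j' hj2 (by omega)
            · simp only [List.getElem_cons_succ]
              simp only [List.length_cons] at hj
              exact hl.2.2.2 i' j' (by omega) (by omega)
      have := hmax _ hPext
      omega

end PairLemma

/-- For a chordal graph `G` on `n` vertices with no isolated vertices,
`NC(G)` is `(n - iγ(G) - 1)`-collapsible. -/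
theorem noncover_collapsible_igamma (G : SimpleGraph V) [DecidableRel G.Adj]
    (hG : IsChordal G) (hiso : ∀ v : V, ∃ u, G.Adj v u) :
    Collapsible (Fintype.card V - igamma G - 1) (NC G) := by
  classical
  have hNC : NC G = DD G Finset.univ ∅ := by
    ext W
    simp [NC, mem_DD, Finset.compl_eq_univ_sdiff]
  rw [hNC]
  apply GM G (chordal_pair G hG) (Fintype.card V) Finset.univ ∅
    (by rw [Finset.card_univ]) (Finset.empty_subset _)
  intro M hM
  have hig : igamma G ≤ M.card := by
    apply Nat.sInf_le
    intro I _
    refine ⟨M, le_rfl, fun a _ => ?_⟩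
    by_cases haM : a ∈ M
    · exact Or.inl haM
    · have hmax := hM.2.2 a (by simp) haM
      rw [IndepSet] at hmax
      push_neg at hmax
      obtain ⟨p, hp, q, hq, hpq⟩ := hmax
      rcases Finset.mem_insert.1 hp with rfl | hpM
      · rcases Finset.mem_insert.1 hq with rfl | hqM
        · exact (G.irrefl hpq).elim
        · exact Or.inr ⟨q, hqM, hpq.symm⟩
      · rcases Finset.mem_insert.1 hq with rfl | hqM
        · exact Or.inr ⟨p, hpM, hpq⟩
        · exact (hM.2.1 p hpM q hqM hpq).elim
  rw [Finset.card_univ]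
  omega
end

section
/- Let G be a chordal graph on n vertices with no isolated vertices. Then NC(G) is (n − γ(G) − 1)-collapsible, where γ(G) is the domination number of G. -/
variable {V : Type*} [Fintype V] [DecidableEq V]

open Finset


set_option linter.unusedSectionVars false

theorem collapsible_mono {K : Finset (Finset V)} {d d' : ℕ} (h : d ≤ d')
    (hc : Collapsible d K) : Collapsible d' K :=
  (Relation.ReflTransGen.mono
    (fun (_ _ : Finset (Finset V)) (hab : ElemCollapse d _ _) => by obtain ⟨σ, hf, hc', he⟩ := hab; exact ⟨σ, hf, hc'.trans h, he⟩) :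
    Relation.ReflTransGen (ElemCollapse d) ≤ Relation.ReflTransGen (ElemCollapse d')) K ∅ hc

theorem collapsible_of_max {K : Finset (Finset V)} {d : ℕ} (hne : ∅ ∈ K)
    (τ : Finset V) (hτ : τ ∈ K) (hmax : ∀ ρ ∈ K, ρ ⊆ τ) : Collapsible d K := by
  have : ElemCollapse d K ∅ := by
    refine ⟨∅, ⟨hne, τ, hτ, Finset.empty_subset _, fun ρ hρ _ => hmax ρ hρ⟩, Nat.zero_le _, ?_⟩
    ext ρ; simp
  exact Relation.ReflTransGen.single this

/-- the cone over a complex -/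
def coneF (a : V) (K : Finset (Finset V)) : Finset (Finset V) := K ∪ K.image (insert a)

theorem coneF_collapse_aux (a : V) {d : ℕ} :
    ∀ {X : Finset (Finset V)}, Relation.ReflTransGen (ElemCollapse d) X ∅ →
      (∀ s ∈ X, a ∉ s) → Relation.ReflTransGen (ElemCollapse d) (coneF a X) ∅ := by
  intro X hX
  induction hX using Relation.ReflTransGen.head_induction_on with
  | refl =>
    intro _
    have : coneF a (∅ : Finset (Finset V)) = ∅ := by simp [coneF]
    rw [this]
  | head hstep hrest ih =>
    rename_i X' Xmid
    intro hcond
    obtain ⟨σ, ⟨hσK, τ, hτK, hστ, hmax⟩, hcard, rfl⟩ := hstep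
    have haσ : a ∉ σ := hcond σ hσK
    have hstep' : ElemCollapse d (coneF a X') (coneF a (X'.filter fun ρ => ¬ σ ⊆ ρ)) := by
      refine ⟨σ, ⟨Finset.mem_union_left _ hσK, insert a τ, ?_, hστ.trans (Finset.subset_insert _ _), ?_⟩,
        hcard, ?_⟩
      · exact Finset.mem_union_right _ (Finset.mem_image_of_mem _ hτK)
      · intro ρ hρ hσρ
        rcases Finset.mem_union.mp hρ with h | h
        · exact (hmax ρ h hσρ).trans (Finset.subset_insert _ _)
        · obtain ⟨s, hs, rfl⟩ := Finset.mem_image.mp h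
          have : σ ⊆ s := fun x hx => by
            rcases Finset.mem_insert.mp (hσρ hx) with rfl | h'
            · exact absurd hx haσ
            · exact h'
          exact Finset.insert_subset_insert _ (hmax s hs this)
      · ext ρ
        constructor
        · intro hρ
          rcases Finset.mem_union.mp hρ with h | h
          · obtain ⟨hs, hn⟩ := Finset.mem_filter.mp h
            exact Finset.mem_filter.mpr ⟨Finset.mem_union_left _ hs, hn⟩
          · obtain ⟨s, hs', rfl⟩ := Finset.mem_image.mp h
            obtain ⟨hs, hn⟩ := Finset.mem_filter.mp hs'
            refine Finset.mem_filter.mpr ⟨Finset.mem_union_right _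
              (Finset.mem_image.mpr ⟨s, hs, rfl⟩), fun hss => hn ?_⟩
            intro x hx
            rcases Finset.mem_insert.mp (hss hx) with rfl | h'
            · exact absurd hx haσ
            · exact h'
        · intro hρ
          obtain ⟨hmem, hn⟩ := Finset.mem_filter.mp hρ
          rcases Finset.mem_union.mp hmem with h | h
          · exact Finset.mem_union_left _ (Finset.mem_filter.mpr ⟨h, hn⟩)
          · obtain ⟨s, hs, rfl⟩ := Finset.mem_image.mp h
            refine Finset.mem_union_right _ (Finset.mem_image.mpr
              ⟨s, Finset.mem_filter.mpr ⟨hs, ?_⟩, rfl⟩)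
            exact fun hss => hn (hss.trans (Finset.subset_insert _ _))
    refine Relation.ReflTransGen.head hstep' (ih ?_)
    intro s hs
    exact hcond s (Finset.mem_filter.mp hs).1

theorem coneF_collapsible (a : V) {d : ℕ} {K : Finset (Finset V)}
    (ha : ∀ s ∈ K, a ∉ s) (h : Collapsible d K) : Collapsible d (coneF a K) :=
  coneF_collapse_aux a h ha

/-- deletion of a vertex -/
def delF (v : V) (K : Finset (Finset V)) : Finset (Finset V) := K.filter fun s => v ∉ s

/-- link of a vertex -/
def vpart (v : V) (K : Finset (Finset V)) : Finset (Finset V) :=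
  (K.filter fun s => v ∈ s).image fun s => s.erase v

theorem mem_vpart {v : V} {K : Finset (Finset V)} {ρ : Finset V} :
    ρ ∈ vpart v K ↔ v ∉ ρ ∧ insert v ρ ∈ K := by
  simp only [vpart, Finset.mem_image, Finset.mem_filter]
  constructor
  · rintro ⟨s, ⟨hs, hvs⟩, rfl⟩
    exact ⟨Finset.notMem_erase _ _, by rwa [Finset.insert_erase hvs]⟩
  · rintro ⟨hv, hins⟩
    exact ⟨insert v ρ, ⟨hins, Finset.mem_insert_self _ _⟩, by rw [Finset.erase_insert hv]⟩

theorem link_collapse_aux (v : V) {d : ℕ} :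
    ∀ {X : Finset (Finset V)}, Relation.ReflTransGen (ElemCollapse d) X ∅ →
    ∀ K : Finset (Finset V), vpart v K = X →
      Relation.ReflTransGen (ElemCollapse (d+1)) K (delF v K) := by
  intro X hX
  induction hX using Relation.ReflTransGen.head_induction_on with
  | refl =>
    intro K hK
    have : K = delF v K := by
      ext s
      simp only [delF, Finset.mem_filter]
      refine ⟨fun hs => ⟨hs, fun hvs => ?_⟩, fun hs => hs.1⟩
      have : s.erase v ∈ vpart v K := by
        rw [mem_vpart]
        exact ⟨Finset.notMem_erase _ _, by rwa [Finset.insert_erase hvs]⟩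
      rw [hK] at this
      exact absurd this (Finset.notMem_empty _)
    rw [← this]
  | head hstep hrest ih =>
    intro K hK
    obtain ⟨σ, ⟨hσK, τ, hτK, hστ, hmax⟩, hcard, rfl⟩ := hstep
    rw [← hK] at hσK hτK hmax
    have hvσ : v ∉ σ := (mem_vpart.mp hσK).1
    have hvτ : v ∉ τ := (mem_vpart.mp hτK).1
    set K₁ := K.filter (fun ρ => ¬ insert v σ ⊆ ρ) with hK₁
    have hstep' : ElemCollapse (d+1) K K₁ := by
      refine ⟨insert v σ, ⟨(mem_vpart.mp hσK).2, insert v τ, (mem_vpart.mp hτK).2,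
        Finset.insert_subset_insert _ hστ, ?_⟩, ?_, rfl⟩
      · intro ρ hρ hσρ
        have hvρ : v ∈ ρ := hσρ (Finset.mem_insert_self _ _)
        have hρ' : ρ.erase v ∈ vpart v K := by
          rw [mem_vpart]
          exact ⟨Finset.notMem_erase _ _, by rwa [Finset.insert_erase hvρ]⟩
        have hσρ' : σ ⊆ ρ.erase v := by
          intro x hx
          exact Finset.mem_erase.mpr ⟨fun hxv => hvσ (hxv ▸ hx), hσρ (Finset.mem_insert_of_mem hx)⟩
        have := hmax _ hρ' hσρ'
        calc ρ = insert v (ρ.erase v) := (Finset.insert_erase hvρ).symm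
        _ ⊆ insert v τ := Finset.insert_subset_insert _ this
      · rw [Finset.card_insert_of_notMem hvσ]
        exact Nat.succ_le_succ hcard
    have hvp : vpart v K₁ = (vpart v K).filter fun ρ => ¬ σ ⊆ ρ := by
      ext ρ
      simp only [mem_vpart, hK₁, Finset.mem_filter]
      constructor
      · rintro ⟨hvρ, hins, hn⟩
        refine ⟨⟨hvρ, hins⟩, fun hσρ => hn ?_⟩
        exact Finset.insert_subset_insert _ hσρ
      · rintro ⟨⟨hvρ, hins⟩, hn⟩
        refine ⟨hvρ, hins, fun hss => hn ?_⟩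
        intro x hx
        rcases Finset.mem_insert.mp (hss (Finset.mem_insert_of_mem hx)) with rfl | h'
        · exact absurd hx hvσ
        · exact h'
    have hdel : delF v K₁ = delF v K := by
      ext s
      simp only [delF, hK₁, Finset.mem_filter]
      constructor
      · rintro ⟨⟨hs, _⟩, hvs⟩; exact ⟨hs, hvs⟩
      · rintro ⟨hs, hvs⟩
        exact ⟨⟨hs, fun hss => hvs (hss (Finset.mem_insert_self _ _))⟩, hvs⟩
    rw [hK] at hvp
    have := ih K₁ hvp
    rw [hdel] at this
    exact Relation.ReflTransGen.head hstep' this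

theorem collapsible_link (v : V) {d : ℕ} {K : Finset (Finset V)}
    (h1 : Collapsible d (vpart v K)) (h2 : Collapsible (d+1) (delF v K)) :
    Collapsible (d+1) K :=
  Relation.ReflTransGen.trans (link_collapse_aux v h1 K rfl) h2

/-! ### Reachability within a vertex set -/

def ReachIn (G : SimpleGraph V) (B : Finset V) (x y : V) : Prop :=
  ∃ p : G.Walk x y, ∀ z ∈ p.support, z ∈ B

theorem reachIn_refl {G : SimpleGraph V} {B : Finset V} {x : V} (hx : x ∈ B) :
    ReachIn G B x x :=
  ⟨SimpleGraph.Walk.nil, fun z hz => by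
    rw [SimpleGraph.Walk.support_nil, List.mem_singleton] at hz; exact hz ▸ hx⟩

theorem reachIn_symm {G : SimpleGraph V} {B : Finset V} {x y : V}
    (h : ReachIn G B x y) : ReachIn G B y x := by
  obtain ⟨p, hp⟩ := h
  exact ⟨p.reverse, fun z hz => hp z (by
    rwa [SimpleGraph.Walk.support_reverse, List.mem_reverse] at hz)⟩

theorem reachIn_trans {G : SimpleGraph V} {B : Finset V} {x y z : V}
    (h1 : ReachIn G B x y) (h2 : ReachIn G B y z) : ReachIn G B x z := by
  obtain ⟨p, hp⟩ := h1
  obtain ⟨q, hq⟩ := h2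
  refine ⟨p.append q, fun t ht => ?_⟩
  rw [SimpleGraph.Walk.mem_support_append_iff] at ht
  rcases ht with h | h
  · exact hp t h
  · exact hq t h

theorem reachIn_adj {G : SimpleGraph V} {B : Finset V} {x y w : V}
    (h : ReachIn G B x y) (hadj : G.Adj y w) (hw : w ∈ B) : ReachIn G B x w := by
  obtain ⟨p, hp⟩ := h
  refine ⟨p.append (SimpleGraph.Walk.cons hadj SimpleGraph.Walk.nil), fun z hz => ?_⟩
  rw [SimpleGraph.Walk.mem_support_append_iff] at hz
  rcases hz with h' | h'
  · exact hp z h'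
  · simp only [SimpleGraph.Walk.support_cons, SimpleGraph.Walk.support_nil, List.mem_cons,
      List.mem_singleton, List.not_mem_nil, or_false] at h'
    rcases h' with rfl | rfl
    · exact hp _ p.end_mem_support
    · exact hw

theorem reachIn_of_walk_support {G : SimpleGraph V} {B : Finset V} {x u w : V}
    (p : G.Walk u w) (hp : ∀ z ∈ p.support, z ∈ B) (h : ReachIn G B x u) :
    ∀ z ∈ p.support, ReachIn G B x z := by
  intro z hz
  exact reachIn_trans h ⟨p.takeUntil z hz, fun t ht =>
    hp t (SimpleGraph.Walk.support_takeUntil_subset p hz ht)⟩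

theorem no_walk_pair {G : SimpleGraph V} {a b : V} (hab : a ≠ b) (hnadj : ¬ G.Adj a b)
    (p : G.Walk a b) (hp : ∀ z ∈ p.support, z = a ∨ z = b) : False := by
  cases p with
  | nil => exact hab rfl
  | cons h q =>
    rename_i c
    have hc : c ∈ (SimpleGraph.Walk.cons h q).support := by
      rw [SimpleGraph.Walk.support_cons]
      exact List.mem_cons_of_mem _ q.start_mem_support
    rcases hp c hc with rfl | rfl
    · exact (G.ne_of_adj h) rfl
    · exact hnadj h

/-! ### Shortcut lemma -/

theorem shortcut {G : SimpleGraph V} {x y : V} (p : G.Walk x y) (u w : V)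
    (hu : u ∈ p.support) (hw : w ∈ p.support) (hadj : G.Adj u w)
    (hne : s(u, w) ∉ p.edges) :
    ∃ p' : G.Walk x y, (∀ z ∈ p'.support, z ∈ p.support) ∧ p'.length < p.length := by
  induction p with
  | nil =>
    rw [SimpleGraph.Walk.support_nil, List.mem_singleton] at hu hw
    exact absurd (hu.trans hw.symm) (G.ne_of_adj hadj)
  | cons h q ihq =>
    rename_i x' c y'
    simp only [SimpleGraph.Walk.support_cons, List.mem_cons] at hu hw
    rw [SimpleGraph.Walk.edges_cons] at hne
    by_cases hux : u = x'
    · subst hux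
      have hwx : w ≠ u := (G.ne_of_adj hadj).symm
      have hwq : w ∈ q.support := by
        rcases hw with rfl | h'
        · exact absurd rfl hwx
        · exact h'
      have hwc : c ≠ w := by
        rintro rfl
        exact hne (List.mem_cons_self)
      have hlen : (q.takeUntil w hwq).length + (q.dropUntil w hwq).length = q.length := by
        rw [← SimpleGraph.Walk.length_append, SimpleGraph.Walk.take_spec]
      have htpos : 0 < (q.takeUntil w hwq).length := by
        rcases Nat.eq_zero_or_pos (q.takeUntil w hwq).length with h0 | h0
        · exact absurd (SimpleGraph.Walk.eq_of_length_eq_zero h0) hwc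
        · exact h0
      refine ⟨SimpleGraph.Walk.cons hadj (q.dropUntil w hwq), ?_, ?_⟩
      · intro z hz
        simp only [SimpleGraph.Walk.support_cons, List.mem_cons] at hz ⊢
        rcases hz with rfl | hz
        · exact Or.inl rfl
        · exact Or.inr (SimpleGraph.Walk.support_dropUntil_subset q hwq hz)
      · rw [SimpleGraph.Walk.length_cons, SimpleGraph.Walk.length_cons]
        omega
    by_cases hwx : w = x'
    · subst hwx
      have huq : u ∈ q.support := by
        rcases hu with rfl | h'
        · exact absurd rfl hux
        · exact h'
      have huc : c ≠ u := by
        rintro rfl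
        exact hne (by rw [Sym2.eq_swap]; exact List.mem_cons_self)
      have hlen : (q.takeUntil u huq).length + (q.dropUntil u huq).length = q.length := by
        rw [← SimpleGraph.Walk.length_append, SimpleGraph.Walk.take_spec]
      have htpos : 0 < (q.takeUntil u huq).length := by
        rcases Nat.eq_zero_or_pos (q.takeUntil u huq).length with h0 | h0
        · exact absurd (SimpleGraph.Walk.eq_of_length_eq_zero h0) huc
        · exact h0
      refine ⟨SimpleGraph.Walk.cons hadj.symm (q.dropUntil u huq), ?_, ?_⟩
      · intro z hz
        simp only [SimpleGraph.Walk.support_cons, List.mem_cons] at hz ⊢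
        rcases hz with rfl | hz
        · exact Or.inl rfl
        · exact Or.inr (SimpleGraph.Walk.support_dropUntil_subset q huq hz)
      · rw [SimpleGraph.Walk.length_cons, SimpleGraph.Walk.length_cons]
        omega
    · have huq : u ∈ q.support := by
        rcases hu with rfl | h'
        · exact absurd rfl hux
        · exact h'
      have hwq : w ∈ q.support := by
        rcases hw with rfl | h'
        · exact absurd rfl hwx
        · exact h'
      have hne' : s(u, w) ∉ q.edges := fun h' => hne (List.mem_cons_of_mem _ h')
      obtain ⟨q', hq's, hq'l⟩ := ihq huq hwq hne'
      refine ⟨SimpleGraph.Walk.cons h q', ?_, ?_⟩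
      · intro z hz
        simp only [SimpleGraph.Walk.support_cons, List.mem_cons] at hz ⊢
        rcases hz with rfl | hz
        · exact Or.inl rfl
        · exact Or.inr (hq's z hz)
      · rw [SimpleGraph.Walk.length_cons, SimpleGraph.Walk.length_cons]
        omega

theorem walk_length_two {G : SimpleGraph V} {s t : V} (hst : s ≠ t) (hnadj : ¬ G.Adj s t)
    (r : G.Walk s t) : 2 ≤ r.length := by
  by_contra hlt
  push_neg at hlt
  have h01 : r.length = 0 ∨ r.length = 1 := by omega
  rcases h01 with h0 | h1
  · exact hst (SimpleGraph.Walk.eq_of_length_eq_zero h0)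
  · obtain ⟨c, hadj, r', rfl⟩ := SimpleGraph.Walk.exists_eq_cons_of_ne hst r
    rw [SimpleGraph.Walk.length_cons] at h1
    have h0' : r'.length = 0 := by omega
    have hc : c = t := SimpleGraph.Walk.eq_of_length_eq_zero h0'
    subst hc
    exact hnadj hadj

def SimpA (G : SimpleGraph V) (A : Finset V) (z : V) : Prop :=
  ∀ x ∈ A, ∀ y ∈ A, G.Adj z x → G.Adj z y → x ≠ y → G.Adj x y

theorem dirac (G : SimpleGraph V) (hG : IsChordal G) :
    ∀ (n : ℕ) (A : Finset V), A.card ≤ n →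
    (∀ x ∈ A, ∀ y ∈ A, x ≠ y → G.Adj x y) ∨
    (∃ z₁ ∈ A, ∃ z₂ ∈ A, z₁ ≠ z₂ ∧ ¬ G.Adj z₁ z₂ ∧ SimpA G A z₁ ∧ SimpA G A z₂) := by
  intro n
  induction n with
  | zero =>
    intro A hA
    left
    intro x hx
    rw [Finset.card_eq_zero.mp (Nat.le_zero.mp hA)] at hx
    exact absurd hx (Finset.notMem_empty _)
  | succ n ih =>
    intro A hAcard
    by_cases hcomp : ∀ x ∈ A, ∀ y ∈ A, x ≠ y → G.Adj x y
    · exact Or.inl hcomp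
    push_neg at hcomp
    obtain ⟨a, ha, b, hb, hab, hnadj⟩ := hcomp
    classical
    -- minimal separator
    set Sep : Finset V → Prop :=
      fun S => S ⊆ A ∧ a ∉ S ∧ b ∉ S ∧ ¬ ReachIn G (A \ S) a b with hSepDef
    have hSep0 : Sep ((A.erase a).erase b) := by
      refine ⟨(Finset.erase_subset _ _).trans (Finset.erase_subset _ _), ?_, ?_, ?_⟩
      · intro h
        exact (Finset.mem_erase.mp (Finset.mem_of_mem_erase h)).1 rfl
      · intro h
        exact (Finset.mem_erase.mp h).1 rfl
      · rintro ⟨p, hp⟩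
        refine no_walk_pair hab hnadj p (fun z hz => ?_)
        have := hp z hz
        rw [Finset.mem_sdiff] at this
        by_contra hcon
        push_neg at hcon
        exact this.2 (Finset.mem_erase.mpr ⟨hcon.2,
          Finset.mem_erase.mpr ⟨hcon.1, this.1⟩⟩)
    have hLne : {k | ∃ S, Sep S ∧ S.card = k}.Nonempty :=
      ⟨_, _, hSep0, rfl⟩
    obtain ⟨S, hSsep, hScard⟩ := Nat.sInf_mem hLne
    have hmin : ∀ S', Sep S' → S.card ≤ S'.card := by
      intro S' h
      rw [hScard]
      exact Nat.sInf_le ⟨S', h, rfl⟩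
    set D := A \ S with hD
    have hDA : D ⊆ A := Finset.sdiff_subset
    have haD : a ∈ D := Finset.mem_sdiff.mpr ⟨ha, hSsep.2.1⟩
    have hbD : b ∈ D := Finset.mem_sdiff.mpr ⟨hb, hSsep.2.2.1⟩
    have hreachD : ∀ c z, ReachIn G D c z → z ∈ D := by
      rintro c z ⟨r, hr⟩
      exact hr z r.end_mem_support
    have hdisj : ∀ z, ReachIn G D a z → ReachIn G D b z → False := by
      intro z h1 h2
      exact hSsep.2.2.2 (reachIn_trans h1 (reachIn_symm h2))
    -- K2 : each separator vertex has neighbors in both sides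
    have nbr_half : ∀ s ∈ S, ∀ (c t : V), c ≠ s → ∀ (p : G.Walk c t),
        (∀ z ∈ p.support, z ∈ A \ (S.erase s)) → s ∈ p.support →
        ∃ u, G.Adj s u ∧ ReachIn G D c u := by
      intro s hs c t hcs p hp hsp
      have hcount : (p.takeUntil s hsp).support.count s = 1 :=
        p.count_support_takeUntil_eq_one hsp
      obtain ⟨u, hadj, r, heq⟩ :=
        SimpleGraph.Walk.exists_eq_cons_of_ne (Ne.symm hcs) (p.takeUntil s hsp).reverse
      have hsr : s ∉ r.support := by
        have h2 : (p.takeUntil s hsp).reverse.support.count s = 1 := by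
          rw [SimpleGraph.Walk.support_reverse, List.count_reverse]
          exact hcount
        rw [heq, SimpleGraph.Walk.support_cons, List.count_cons_self] at h2
        exact List.count_eq_zero.mp (by omega)
      have hrsupp : ∀ z ∈ r.support, z ∈ D := by
        intro z hz
        have hzq : z ∈ (p.takeUntil s hsp).support := by
          have : z ∈ (p.takeUntil s hsp).reverse.support := by
            rw [heq, SimpleGraph.Walk.support_cons]
            exact List.mem_cons_of_mem _ hz
          rwa [SimpleGraph.Walk.support_reverse, List.mem_reverse] at this
        have hzA := hp z (SimpleGraph.Walk.support_takeUntil_subset p hsp hzq)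
        rw [Finset.mem_sdiff] at hzA
        refine Finset.mem_sdiff.mpr ⟨hzA.1, fun hzS => ?_⟩
        have hzs : z ≠ s := fun h => hsr (h ▸ hz)
        exact hzA.2 (Finset.mem_erase.mpr ⟨hzs, hzS⟩)
      exact ⟨u, hadj, reachIn_symm ⟨r, hrsupp⟩⟩
    have K2 : ∀ s ∈ S, (∃ u, G.Adj s u ∧ ReachIn G D a u) ∧
        (∃ u, G.Adj s u ∧ ReachIn G D b u) := by
      intro s hs
      have hnsep : ¬ Sep (S.erase s) := by
        intro hsep'
        have h1 := hmin _ hsep'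
        rw [Finset.card_erase_of_mem hs] at h1
        have hpos : 0 < S.card := Finset.card_pos.mpr ⟨s, hs⟩
        omega
      have hreach : ReachIn G (A \ (S.erase s)) a b := by
        by_contra hnr
        exact hnsep ⟨(Finset.erase_subset _ _).trans hSsep.1,
          fun h => hSsep.2.1 (Finset.mem_of_mem_erase h),
          fun h => hSsep.2.2.1 (Finset.mem_of_mem_erase h), hnr⟩
      obtain ⟨p, hp⟩ := hreach
      have hsp : s ∈ p.support := by
        by_contra hns
        refine hSsep.2.2.2 ⟨p, fun z hz => ?_⟩
        have := hp z hz
        rw [Finset.mem_sdiff] at this ⊢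
        exact ⟨this.1, fun hzS => this.2 (Finset.mem_erase.mpr
          ⟨fun h => hns (h ▸ hz), hzS⟩)⟩
      have has : a ≠ s := fun h => hSsep.2.1 (h ▸ hs)
      have hbs : b ≠ s := fun h => hSsep.2.2.1 (h ▸ hs)
      refine ⟨nbr_half s hs a b has p hp hsp, ?_⟩
      refine nbr_half s hs b a hbs p.reverse ?_ ?_
      · intro z hz
        rw [SimpleGraph.Walk.support_reverse, List.mem_reverse] at hz
        exact hp z hz
      · rw [SimpleGraph.Walk.support_reverse, List.mem_reverse]
        exact hsp
    -- K3 : S is a clique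
    have K3 : ∀ sx ∈ S, ∀ sy ∈ S, sx ≠ sy → G.Adj sx sy := by
      intro sx hsx sy hsy hsxsy
      by_contra hnadjxy
      have hxD : sx ∉ D := fun h => (Finset.mem_sdiff.mp h).2 hsx
      have hyD : sy ∉ D := fun h => (Finset.mem_sdiff.mp h).2 hsy
      obtain ⟨⟨ua, haua, hrua⟩, ⟨ub, hbub, hrub⟩⟩ := K2 sx hsx
      obtain ⟨⟨va, hava, hrva⟩, ⟨vb, hbvb, hrvb⟩⟩ := K2 sy hsy
      -- build the a-side walk
      have mkwalk : ∀ (c u v' : V), G.Adj sx u → G.Adj sy v' → ReachIn G D c u →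
          ReachIn G D c v' → ∃ r : G.Walk sx sy,
            ∀ z ∈ r.support, z = sx ∨ z = sy ∨ ReachIn G D c z := by
        intro c u v' hxu hyv hcu hcv
        obtain ⟨w0, hw0⟩ := reachIn_trans (reachIn_symm hcu) hcv
        refine ⟨SimpleGraph.Walk.cons hxu
          (w0.append (SimpleGraph.Walk.cons hyv.symm SimpleGraph.Walk.nil)), ?_⟩
        intro z hz
        rw [SimpleGraph.Walk.support_cons, List.mem_cons] at hz
        rcases hz with rfl | hz
        · exact Or.inl rfl
        rw [SimpleGraph.Walk.mem_support_append_iff] at hz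
        rcases hz with hz | hz
        · exact Or.inr (Or.inr (reachIn_of_walk_support w0 hw0 hcu z hz))
        · simp only [SimpleGraph.Walk.support_cons, SimpleGraph.Walk.support_nil,
            List.mem_cons, List.mem_singleton, List.not_mem_nil, or_false] at hz
          rcases hz with rfl | rfl
          · exact Or.inr (Or.inr hcv)
          · exact Or.inr (Or.inl rfl)
      obtain ⟨pa, hpa⟩ := mkwalk a ua va haua hava hrua hrva
      obtain ⟨pbrev, hpbrev⟩ := mkwalk b ub vb hbub hbvb hrub hrvb
      -- minimal a-side walk
      have hLAne : {k | ∃ r : G.Walk sx sy,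
          (∀ z ∈ r.support, z = sx ∨ z = sy ∨ ReachIn G D a z) ∧ r.length = k}.Nonempty :=
        ⟨pa.length, pa, hpa, rfl⟩
      obtain ⟨p1, hp1, hp1len⟩ := Nat.sInf_mem hLAne
      set p := p1.bypass with hpdef
      have hPa : ∀ z ∈ p.support, z = sx ∨ z = sy ∨ ReachIn G D a z :=
        fun z hz => hp1 z (SimpleGraph.Walk.support_bypass_subset _ hz)
      have hppath : p.IsPath := SimpleGraph.Walk.bypass_isPath p1
      have hminP : ∀ r : G.Walk sx sy,
          (∀ z ∈ r.support, z = sx ∨ z = sy ∨ ReachIn G D a z) → p.length ≤ r.length := by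
        intro r hr
        calc p.length ≤ p1.length := SimpleGraph.Walk.length_bypass_le p1
        _ ≤ r.length := by rw [hp1len]; exact Nat.sInf_le ⟨r, hr, rfl⟩
      -- minimal b-side walk (from sy to sx)
      have hLBne : {k | ∃ r : G.Walk sy sx,
          (∀ z ∈ r.support, z = sy ∨ z = sx ∨ ReachIn G D b z) ∧ r.length = k}.Nonempty := by
        refine ⟨pbrev.reverse.length, pbrev.reverse, fun z hz => ?_, rfl⟩
        rw [SimpleGraph.Walk.support_reverse, List.mem_reverse] at hz
        rcases hpbrev z hz with h | h | h
        · exact Or.inr (Or.inl h)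
        · exact Or.inl h
        · exact Or.inr (Or.inr h)
      obtain ⟨q1, hq1, hq1len⟩ := Nat.sInf_mem hLBne
      set q := q1.bypass with hqdef
      have hQb : ∀ z ∈ q.support, z = sy ∨ z = sx ∨ ReachIn G D b z :=
        fun z hz => hq1 z (SimpleGraph.Walk.support_bypass_subset _ hz)
      have hqpath : q.IsPath := SimpleGraph.Walk.bypass_isPath q1
      have hminQ : ∀ r : G.Walk sy sx,
          (∀ z ∈ r.support, z = sy ∨ z = sx ∨ ReachIn G D b z) → q.length ≤ r.length := by
        intro r hr
        calc q.length ≤ q1.length := SimpleGraph.Walk.length_bypass_le q1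
        _ ≤ r.length := by rw [hq1len]; exact Nat.sInf_le ⟨r, hr, rfl⟩
      have hlen2p : 2 ≤ p.length := walk_length_two hsxsy hnadjxy p
      have hlen2q : 2 ≤ q.length := walk_length_two (Ne.symm hsxsy)
        (fun h => hnadjxy h.symm) q
      -- common support classification
      have hclassPQ : ∀ z, z ∈ p.support → z ∈ q.support → z = sx ∨ z = sy := by
        intro z h1 h2
        rcases hPa z h1 with rfl | rfl | hra
        · exact Or.inl rfl
        · exact Or.inr rfl
        rcases hQb z h2 with rfl | rfl | hrb
        · exact absurd (hreachD a z hra) hyD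
        · exact absurd (hreachD a z hra) hxD
        · exact absurd hrb (fun h => hdisj z hra h)
      -- the cycle
      set cW : G.Walk sx sx := p.append q with hcW
      have hcyc : cW.IsCycle := by
        rw [SimpleGraph.Walk.isCycle_def]
        refine ⟨⟨?_⟩, ?_, ?_⟩
        · rw [SimpleGraph.Walk.edges_append]
          refine List.Nodup.append hppath.isTrail.edges_nodup hqpath.isTrail.edges_nodup ?_
          intro e hep heq
          revert hep heq
          refine Sym2.ind (fun c1 c2 => ?_) e
          intro hep heq
          have h1p := p.fst_mem_support_of_mem_edges hep
          have h2p := p.snd_mem_support_of_mem_edges hep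
          have h1q := q.fst_mem_support_of_mem_edges heq
          have h2q := q.snd_mem_support_of_mem_edges heq
          have hne12 : c1 ≠ c2 := G.ne_of_adj (p.adj_of_mem_edges hep)
          rcases hclassPQ c1 h1p h1q with rfl | rfl <;>
            rcases hclassPQ c2 h2p h2q with rfl | rfl
          · exact hne12 rfl
          · exact hnadjxy (p.adj_of_mem_edges hep)
          · exact hnadjxy (p.adj_of_mem_edges hep).symm
          · exact hne12 rfl
        · intro h
          have := congrArg SimpleGraph.Walk.length h
          rw [SimpleGraph.Walk.length_append] at this
          simp only [SimpleGraph.Walk.length_nil] at this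
          omega
        · rw [SimpleGraph.Walk.tail_support_append]
          have hnp := hppath.support_nodup
          have hnq := hqpath.support_nodup
          rw [SimpleGraph.Walk.support_eq_cons] at hnp hnq
          refine List.Nodup.append (List.nodup_cons.mp hnp).2 (List.nodup_cons.mp hnq).2 ?_
          intro z hz1 hz2
          have hzp : z ∈ p.support := List.mem_of_mem_tail hz1
          have hzq : z ∈ q.support := List.mem_of_mem_tail hz2
          rcases hclassPQ z hzp hzq with rfl | rfl
          · exact (List.nodup_cons.mp hnp).1 hz1
          · exact (List.nodup_cons.mp hnq).1 hz2
      have hclen : 4 ≤ cW.length := by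
        rw [hcW, SimpleGraph.Walk.length_append]
        omega
      obtain ⟨u, hu, w, hw, hadjuw, hne⟩ := hG sx cW hcyc hclen
      -- shortcut helpers
      have pside : ∀ u' w', u' ∈ p.support → w' ∈ p.support → G.Adj u' w' →
          s(u', w') ∉ cW.edges → False := by
        intro u' w' hu' hw' hadj' hne'
        have hnep : s(u', w') ∉ p.edges := fun h =>
          hne' (by rw [hcW, SimpleGraph.Walk.edges_append]; exact List.mem_append_left _ h)
        obtain ⟨p', hp's, hp'l⟩ := shortcut p u' w' hu' hw' hadj' hnep
        have := hminP p' (fun z hz => hPa z (hp's z hz))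
        omega
      have qside : ∀ u' w', u' ∈ q.support → w' ∈ q.support → G.Adj u' w' →
          s(u', w') ∉ cW.edges → False := by
        intro u' w' hu' hw' hadj' hne'
        have hneq : s(u', w') ∉ q.edges := fun h =>
          hne' (by rw [hcW, SimpleGraph.Walk.edges_append]; exact List.mem_append_right _ h)
        obtain ⟨q', hq's, hq'l⟩ := shortcut q u' w' hu' hw' hadj' hneq
        have := hminQ q' (fun z hz => hQb z (hq's z hz))
        omega
      -- classification of chord endpoints
      have hclass : ∀ z, z ∈ cW.support →
          z = sx ∨ z = sy ∨ (ReachIn G D a z ∧ z ∈ p.support) ∨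
            (ReachIn G D b z ∧ z ∈ q.support) := by
        intro z hz
        rw [hcW, SimpleGraph.Walk.mem_support_append_iff] at hz
        rcases hz with h | h
        · rcases hPa z h with rfl | rfl | hra
          · exact Or.inl rfl
          · exact Or.inr (Or.inl rfl)
          · exact Or.inr (Or.inr (Or.inl ⟨hra, h⟩))
        · rcases hQb z h with rfl | rfl | hrb
          · exact Or.inr (Or.inl rfl)
          · exact Or.inl rfl
          · exact Or.inr (Or.inr (Or.inr ⟨hrb, h⟩))
      rcases hclass u hu with rfl | rfl | ⟨hrau, hup⟩ | ⟨hrbu, huq⟩ <;>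
        rcases hclass w hw with rfl | rfl | ⟨hraw, hwp⟩ | ⟨hrbw, hwq⟩
      · exact (G.ne_of_adj hadjuw) rfl
      · exact hnadjxy hadjuw
      · exact pside _ _ p.start_mem_support hwp hadjuw hne
      · exact qside _ _ q.end_mem_support hwq hadjuw hne
      · exact hnadjxy hadjuw.symm
      · exact (G.ne_of_adj hadjuw) rfl
      · exact pside _ _ p.end_mem_support hwp hadjuw hne
      · exact qside _ _ q.start_mem_support hwq hadjuw hne
      · exact pside _ _ hup p.start_mem_support hadjuw hne
      · exact pside _ _ hup p.end_mem_support hadjuw hne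
      · exact pside _ _ hup hwp hadjuw hne
      · exact hdisj w (reachIn_adj hrau hadjuw (hreachD b w hrbw)) hrbw
      · exact qside _ _ huq q.end_mem_support hadjuw hne
      · exact qside _ _ huq q.start_mem_support hadjuw hne
      · exact hdisj u (reachIn_adj hraw hadjuw.symm (hreachD b u hrbu)) hrbu
      · exact qside _ _ huq hwq hadjuw hne
    -- the side construction
    have side : ∀ c other : V, c ∈ D → other ∈ A → other ∉ S →
        ¬ ReachIn G D c other →
        ∃ z, z ∈ D ∧ ReachIn G D c z ∧ SimpA G A z := by
      intro c other hcD hoA hoS hnr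
      set Cc := D.filter (fun z => ReachIn G D c z) with hCcDef
      set Ac := Cc ∪ S with hAcDef
      have hAcA : Ac ⊆ A := by
        intro z hz
        rcases Finset.mem_union.mp hz with h | h
        · exact hDA (Finset.mem_filter.mp h).1
        · exact hSsep.1 h
      have hoAc : other ∉ Ac := by
        intro h
        rcases Finset.mem_union.mp h with h' | h'
        · exact hnr (Finset.mem_filter.mp h').2
        · exact hoS h'
      have hlt : Ac.card < A.card :=
        Finset.card_lt_card ⟨hAcA, fun hsub => hoAc (hsub hoA)⟩
      have hcCc : c ∈ Cc := Finset.mem_filter.mpr ⟨hcD, reachIn_refl hcD⟩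
      have hclosure : ∀ z ∈ Cc, ∀ t ∈ A, G.Adj z t → t ∈ Ac := by
        intro z hz t ht hadj
        by_cases htS : t ∈ S
        · exact Finset.mem_union_right _ htS
        · refine Finset.mem_union_left _ (Finset.mem_filter.mpr
            ⟨Finset.mem_sdiff.mpr ⟨ht, htS⟩,
             reachIn_adj (Finset.mem_filter.mp hz).2 hadj (Finset.mem_sdiff.mpr ⟨ht, htS⟩)⟩)
      have hlift : ∀ z ∈ Cc, SimpA G Ac z → SimpA G A z := by
        intro z hz hsimp x hxA y hyA hzx hzy hxy
        exact hsimp x (hclosure z hz x hxA hzx) y (hclosure z hz y hyA hzy) hzx hzy hxy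
      rcases ih Ac (by omega) with hcompl | ⟨z₁, hz₁, z₂, hz₂, hz12, hnadj12, hs₁, hs₂⟩
      · refine ⟨c, hcD, reachIn_refl hcD, hlift c hcCc ?_⟩
        intro x hx y hy _ _ hxy
        exact hcompl x hx y hy hxy
      · have hnotboth : z₁ ∉ S ∨ z₂ ∉ S := by
          by_contra h
          push_neg at h
          exact hnadj12 (K3 z₁ h.1 z₂ h.2 hz12)
        rcases hnotboth with h1 | h2
        · have hz₁Cc : z₁ ∈ Cc := by
            rcases Finset.mem_union.mp hz₁ with h | h
            · exact h
            · exact absurd h h1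
          exact ⟨z₁, (Finset.mem_filter.mp hz₁Cc).1, (Finset.mem_filter.mp hz₁Cc).2,
            hlift z₁ hz₁Cc hs₁⟩
        · have hz₂Cc : z₂ ∈ Cc := by
            rcases Finset.mem_union.mp hz₂ with h | h
            · exact h
            · exact absurd h h2
          exact ⟨z₂, (Finset.mem_filter.mp hz₂Cc).1, (Finset.mem_filter.mp hz₂Cc).2,
            hlift z₂ hz₂Cc hs₂⟩
    obtain ⟨z, hzD, hrza, hzsimp⟩ := side a b haD hb hSsep.2.2.1 hSsep.2.2.2
    obtain ⟨z', hz'D, hrz'b, hz'simp⟩ := side b a hbD ha hSsep.2.1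
      (fun h => hSsep.2.2.2 (reachIn_symm h))
    right
    refine ⟨z, hDA hzD, z', hDA hz'D, ?_, ?_, hzsimp, hz'simp⟩
    · rintro rfl
      exact hSsep.2.2.2 (reachIn_trans hrza (reachIn_symm hrz'b))
    · intro hadj
      have : ReachIn G D a z' := reachIn_adj hrza hadj hz'D
      exact hSsep.2.2.2 (reachIn_trans this (reachIn_symm hrz'b))

theorem exists_simp_pair' (G : SimpleGraph V) (hG : IsChordal G) (A : Finset V)
    (hA : A.Nonempty) (hnoiso : ∀ a ∈ A, ∃ b ∈ A, G.Adj a b) :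
    ∃ z ∈ A, ∃ v ∈ A, G.Adj z v ∧ ∀ w ∈ A, G.Adj z w → w = v ∨ G.Adj v w := by
  have hsimp : ∃ z ∈ A, SimpA G A z := by
    rcases dirac G hG A.card A le_rfl with hcompl | ⟨z₁, hz₁, _, _, _, _, hs₁, _⟩
    · obtain ⟨z, hz⟩ := hA
      exact ⟨z, hz, fun x hx y hy _ _ hxy => hcompl x hx y hy hxy⟩
    · exact ⟨z₁, hz₁, hs₁⟩
  obtain ⟨z, hzA, hzsimp⟩ := hsimp
  obtain ⟨v, hvA, hadj⟩ := hnoiso z hzA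
  refine ⟨z, hzA, v, hvA, hadj, fun w hw hzw => ?_⟩
  rcases eq_or_ne w v with rfl | hwv
  · exact Or.inl rfl
  · exact Or.inr (hzsimp w hw v hvA hzw hadj hwv).symm

def NCH (A : Finset V) (E : Finset (Finset V)) : Finset (Finset V) :=
  A.powerset.filter fun W => ∃ e ∈ E, Disjoint e W

theorem mem_NCH {A : Finset V} {E : Finset (Finset V)} {W : Finset V} :
    W ∈ NCH A E ↔ W ⊆ A ∧ ∃ e ∈ E, Disjoint e W := by
  simp only [NCH, Finset.mem_filter, Finset.mem_powerset]

def DomH (A : Finset V) (E : Finset (Finset V)) (W : Finset V) : Prop :=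
  W ⊆ A ∧ ∀ a ∈ A, a ∈ W ∨ ∃ e ∈ E, a ∈ e ∧ e.erase a ⊆ W

noncomputable def gammaH (A : Finset V) (E : Finset (Finset V)) : ℕ :=
  sInf {k | ∃ W : Finset V, W.card = k ∧ DomH A E W}

theorem domH_self (A : Finset V) (E : Finset (Finset V)) : DomH A E A :=
  ⟨Finset.Subset.refl _, fun a ha => Or.inl ha⟩

theorem gammaH_exists (A : Finset V) (E : Finset (Finset V)) :
    ∃ W, W.card = gammaH A E ∧ DomH A E W :=
  Nat.sInf_mem (⟨A.card, A, rfl, domH_self A E⟩ :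
    Set.Nonempty {k | ∃ W : Finset V, W.card = k ∧ DomH A E W})

theorem gammaH_le {A E : _} {W : Finset V} (h : DomH A E W) : gammaH A E ≤ W.card :=
  Nat.sInf_le ⟨W, rfl, h⟩

/-- link of NCH at v -/
theorem NCH_link {A : Finset V} {E : Finset (Finset V)} {v : V} (hv : v ∈ A) :
    vpart v (NCH A E) = NCH (A.erase v) (E.filter fun e => v ∉ e) := by
  ext ρ
  rw [mem_vpart]
  constructor
  · rintro ⟨hvρ, hins⟩
    rw [mem_NCH] at hins
    obtain ⟨hsub, e, he, hdisj⟩ := hins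
    refine mem_NCH.mpr ⟨fun x hx => Finset.mem_erase.mpr ⟨fun h => hvρ (h ▸ hx), hsub (Finset.mem_insert_of_mem hx)⟩,
      e, Finset.mem_filter.mpr ⟨he, fun hve => ?_⟩, ?_⟩
    · exact (Finset.disjoint_left.mp hdisj hve) (Finset.mem_insert_self _ _)
    · exact hdisj.mono_right (Finset.subset_insert _ _)
  · intro hmem
    obtain ⟨hsub, e, he, hdisj⟩ := mem_NCH.mp hmem
    obtain ⟨heE, hve⟩ := Finset.mem_filter.mp he
    have hvρ : v ∉ ρ := fun h => (Finset.mem_erase.mp (hsub h)).1 rfl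
    refine ⟨hvρ, mem_NCH.mpr ⟨Finset.insert_subset hv
      (hsub.trans (Finset.erase_subset _ _)), e, heE, ?_⟩⟩
    rw [Finset.disjoint_insert_right]
    exact ⟨hve, hdisj⟩

/-- deletion of NCH at v -/
theorem NCH_del {A : Finset V} {E : Finset (Finset V)} {v : V} :
    delF v (NCH A E) = NCH (A.erase v) (E.image fun e => e.erase v) := by
  ext W
  simp only [delF, Finset.mem_filter]
  rw [mem_NCH, mem_NCH]
  constructor
  · rintro ⟨⟨hsub, e, he, hdisj⟩, hvW⟩
    refine ⟨fun x hx => Finset.mem_erase.mpr ⟨fun h => hvW (h ▸ hx), hsub hx⟩,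
      e.erase v, Finset.mem_image_of_mem _ he, hdisj.mono_left (Finset.erase_subset _ _)⟩
  · rintro ⟨hsub, e', he', hdisj⟩
    obtain ⟨e, he, rfl⟩ := Finset.mem_image.mp he'
    have hvW : v ∉ W := fun h => (Finset.mem_erase.mp (hsub h)).1 rfl
    refine ⟨⟨hsub.trans (Finset.erase_subset _ _), e, he, ?_⟩, hvW⟩
    rw [Finset.disjoint_left]
    intro x hxe hxW
    rcases eq_or_ne x v with rfl | hxv
    · exact hvW hxW
    · exact Finset.disjoint_left.mp hdisj (Finset.mem_erase.mpr ⟨hxv, hxe⟩) hxW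

/-- NCH is a cone over an isolated vertex -/
theorem NCH_cone {A : Finset V} {E : Finset (Finset V)} {a : V} (ha : a ∈ A)
    (hiso : ∀ e ∈ E, a ∉ e) :
    NCH A E = coneF a (NCH (A.erase a) E) := by
  ext W
  rw [mem_NCH]
  constructor
  · rintro ⟨hsub, e, he, hdisj⟩
    by_cases haW : a ∈ W
    · refine Finset.mem_union_right _ (Finset.mem_image.mpr ⟨W.erase a, ?_, Finset.insert_erase haW⟩)
      rw [mem_NCH]
      exact ⟨fun x hx => Finset.mem_erase.mpr ⟨(Finset.mem_erase.mp hx).1,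
        hsub (Finset.mem_of_mem_erase hx)⟩, e, he, hdisj.mono_right (Finset.erase_subset _ _)⟩
    · refine Finset.mem_union_left _ (mem_NCH.mpr ⟨fun x hx =>
        Finset.mem_erase.mpr ⟨fun h => haW (h ▸ hx), hsub hx⟩, e, he, hdisj⟩)
  · intro hW
    rcases Finset.mem_union.mp hW with h | h
    · obtain ⟨hsub, e, he, hdisj⟩ := mem_NCH.mp h
      exact ⟨hsub.trans (Finset.erase_subset _ _), e, he, hdisj⟩
    · obtain ⟨s, hs, rfl⟩ := Finset.mem_image.mp h
      obtain ⟨hsub, e, he, hdisj⟩ := mem_NCH.mp hs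
      refine ⟨Finset.insert_subset ha (hsub.trans (Finset.erase_subset _ _)), e, he, ?_⟩
      rw [Finset.disjoint_insert_right]
      exact ⟨hiso e he, hdisj⟩

/- gamma inequalities -/

theorem gammaH_shrink {A : Finset V} {E : Finset (Finset V)} {v : V} (hv : v ∈ A) :
    gammaH A E ≤ gammaH (A.erase v) (E.image fun e => e.erase v) + 1 := by
  obtain ⟨W, hWcard, hWsub, hWdom⟩ := gammaH_exists (A.erase v) (E.image fun e => e.erase v)
  have hdom : DomH A E (insert v W) := by
    refine ⟨Finset.insert_subset hv (hWsub.trans (Finset.erase_subset _ _)), fun a ha => ?_⟩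
    rcases eq_or_ne a v with rfl | hav
    · exact Or.inl (Finset.mem_insert_self _ _)
    · rcases hWdom a (Finset.mem_erase.mpr ⟨hav, ha⟩) with h | ⟨e', he', hae', hsub'⟩
      · exact Or.inl (Finset.mem_insert_of_mem h)
      · obtain ⟨e, he, rfl⟩ := Finset.mem_image.mp he'
        refine Or.inr ⟨e, he, Finset.mem_of_mem_erase hae', fun x hx => ?_⟩
        rcases eq_or_ne x v with rfl | hxv
        · exact Finset.mem_insert_self _ _
        · exact Finset.mem_insert_of_mem (hsub' (Finset.mem_erase.mpr
            ⟨(Finset.mem_erase.mp hx).1, Finset.mem_erase.mpr ⟨hxv, (Finset.mem_erase.mp hx).2⟩⟩))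
  calc gammaH A E ≤ (insert v W).card := gammaH_le hdom
  _ ≤ W.card + 1 := Finset.card_insert_le _ _
  _ = gammaH (A.erase v) (E.image fun e => e.erase v) + 1 := by rw [hWcard]

theorem gammaH_iso {A : Finset V} {E : Finset (Finset V)} {a : V} (ha : a ∈ A) :
    gammaH A E ≤ gammaH (A.erase a) E + 1 := by
  obtain ⟨W, hWcard, hWsub, hWdom⟩ := gammaH_exists (A.erase a) E
  have hdom : DomH A E (insert a W) := by
    refine ⟨Finset.insert_subset ha (hWsub.trans (Finset.erase_subset _ _)), fun b hb => ?_⟩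
    rcases eq_or_ne b a with rfl | hba
    · exact Or.inl (Finset.mem_insert_self _ _)
    · rcases hWdom b (Finset.mem_erase.mpr ⟨hba, hb⟩) with h | ⟨e, he, hbe, hsub'⟩
      · exact Or.inl (Finset.mem_insert_of_mem h)
      · exact Or.inr ⟨e, he, hbe, hsub'.trans (Finset.subset_insert _ _)⟩
  calc gammaH A E ≤ (insert a W).card := gammaH_le hdom
  _ ≤ W.card + 1 := Finset.card_insert_le _ _
  _ = gammaH (A.erase a) E + 1 := by rw [hWcard]

theorem gammaH_sing {A : Finset V} {E : Finset (Finset V)} {v : V}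
    (hv : ({v} : Finset V) ∈ E) :
    gammaH A E ≤ gammaH (A.erase v) (E.filter fun e => v ∉ e) := by
  obtain ⟨W, hWcard, hWsub, hWdom⟩ := gammaH_exists (A.erase v) (E.filter fun e => v ∉ e)
  have hdom : DomH A E W := by
    refine ⟨hWsub.trans (Finset.erase_subset _ _), fun a ha => ?_⟩
    rcases eq_or_ne a v with rfl | hav
    · refine Or.inr ⟨{a}, hv, Finset.mem_singleton_self _, ?_⟩
      rw [Finset.erase_singleton]
      exact Finset.empty_subset _
    · rcases hWdom a (Finset.mem_erase.mpr ⟨hav, ha⟩) with h | ⟨e, he, hae, hsub'⟩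
      · exact Or.inl h
      · exact Or.inr ⟨e, (Finset.mem_filter.mp he).1, hae, hsub'⟩
  calc gammaH A E ≤ W.card := gammaH_le hdom
  _ = _ := hWcard

theorem NCH_empty (A : Finset V) : NCH A (∅ : Finset (Finset V)) = ∅ := by
  ext W; simp [mem_NCH]

theorem gammaH_good {G : SimpleGraph V} {A : Finset V} {E : Finset (Finset V)}
    {z v : V} (hzA : z ∈ A) (hvA : v ∈ A) (hzv : G.Adj z v)
    (hsubA : ∀ e ∈ E, e ⊆ A)
    (hcard2 : ∀ e ∈ E, e.card = 2)
    (h2adj : ∀ e ∈ E, ∀ x ∈ e, ∀ y ∈ e, x ≠ y → G.Adj x y)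
    (hcomp : ∀ x ∈ A, ∀ y ∈ A, G.Adj x y → ({x, y} : Finset V) ∈ E)
    (hsimp : ∀ w ∈ A, G.Adj z w → w = v ∨ G.Adj v w) :
    gammaH A E ≤ gammaH (A.erase v) (E.filter fun e => v ∉ e) := by
  obtain ⟨W, hWcard, hWsub, hWdom⟩ := gammaH_exists (A.erase v) (E.filter fun e => v ∉ e)
  have hWsubA : W ⊆ A := hWsub.trans (Finset.erase_subset _ _)
  have hzv' : z ≠ v := G.ne_of_adj hzv
  have key : ∀ w, w ∈ W → G.Adj v w → v ∈ W ∨ ∃ e ∈ E, v ∈ e ∧ e.erase v ⊆ W := by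
    intro w hwW hadj
    refine Or.inr ⟨{v, w}, hcomp v hvA w (hWsubA hwW) hadj, Finset.mem_insert_self _ _, ?_⟩
    intro x hx
    obtain ⟨hxv, hxm⟩ := Finset.mem_erase.mp hx
    rcases Finset.mem_insert.mp hxm with rfl | h
    · exact absurd rfl hxv
    · rwa [Finset.mem_singleton.mp h]
  have hdom : DomH A E W := by
    refine ⟨hWsubA, fun a ha => ?_⟩
    rcases eq_or_ne a v with rfl | hav
    · -- dominate v using z's dominator
      rcases hWdom z (Finset.mem_erase.mpr ⟨hzv', hzA⟩) with hzW | ⟨e, he, hze, hsub'⟩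
      · exact key z hzW hzv.symm
      · obtain ⟨heE, hve⟩ := Finset.mem_filter.mp he
        -- e = {z, w} for some w ≠ z
        have hec : (e.erase z).card = 1 := by
          rw [Finset.card_erase_of_mem hze, hcard2 e heE]
        obtain ⟨w, hw⟩ := Finset.card_eq_one.mp hec
        have hwze : w ∈ e.erase z := hw ▸ Finset.mem_singleton_self w
        obtain ⟨hwz, hwe⟩ := Finset.mem_erase.mp hwze
        have hwW : w ∈ W := hsub' hwze
        have hadjzw : G.Adj z w := h2adj e heE z hze w hwe (Ne.symm hwz)
        rcases hsimp w (hWsubA hwW) hadjzw with rfl | hadjvw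
        · exact absurd hwe hve
        · exact key w hwW hadjvw
    · rcases hWdom a (Finset.mem_erase.mpr ⟨hav, ha⟩) with h | ⟨e, he, hae, hsub'⟩
      · exact Or.inl h
      · exact Or.inr ⟨e, (Finset.mem_filter.mp he).1, hae, hsub'⟩
  calc gammaH A E ≤ W.card := gammaH_le hdom
  _ = _ := hWcard

theorem chain_of_gammaBig {A : Finset V} {E : Finset (Finset V)}
    (hsubA : ∀ e ∈ E, e ⊆ A) (hbig : A.card ≤ gammaH A E + 1) :
    ∀ e ∈ E, ∀ f ∈ E, e ⊆ f ∨ f ⊆ e := by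
  intro e he f hf
  by_contra hcon
  push_neg at hcon
  obtain ⟨hef, hfe⟩ := hcon
  obtain ⟨a, hae, haf⟩ := Finset.not_subset.mp hef
  obtain ⟨b, hbf, hbe⟩ := Finset.not_subset.mp hfe
  have hab : a ≠ b := fun h => haf (h ▸ hbf)
  have haA : a ∈ A := hsubA e he hae
  have hbA : b ∈ A := hsubA f hf hbf
  have hdom : DomH A E ((A.erase a).erase b) := by
    constructor
    · exact (Finset.erase_subset _ _).trans (Finset.erase_subset _ _)
    · intro c hc
      rcases eq_or_ne c a with rfl | hca
      · refine Or.inr ⟨e, he, hae, fun x hx => ?_⟩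
        obtain ⟨hxa, hxe⟩ := Finset.mem_erase.mp hx
        exact Finset.mem_erase.mpr ⟨fun h => hbe (h ▸ hxe),
          Finset.mem_erase.mpr ⟨hxa, hsubA e he hxe⟩⟩
      rcases eq_or_ne c b with rfl | hcb
      · refine Or.inr ⟨f, hf, hbf, fun x hx => ?_⟩
        obtain ⟨hxb, hxf⟩ := Finset.mem_erase.mp hx
        exact Finset.mem_erase.mpr ⟨hxb,
          Finset.mem_erase.mpr ⟨fun h => haf (h ▸ hxf), hsubA f hf hxf⟩⟩
      · exact Or.inl (Finset.mem_erase.mpr ⟨hcb, Finset.mem_erase.mpr ⟨hca, hc⟩⟩)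
  have hcard : ((A.erase a).erase b).card = A.card - 2 := by
    rw [Finset.card_erase_of_mem (Finset.mem_erase.mpr ⟨Ne.symm hab, hbA⟩),
      Finset.card_erase_of_mem haA]
    omega
  have h2 : 2 ≤ A.card := by
    have := Finset.card_le_card (Finset.insert_subset haA (Finset.singleton_subset_iff.mpr hbA)
      : ({a, b} : Finset V) ⊆ A)
    rwa [Finset.card_insert_of_notMem (by simpa using hab), Finset.card_singleton] at this
  have := gammaH_le hdom
  omega

theorem NCH_chain_collapsible {A : Finset V} {E : Finset (Finset V)} (hE : E.Nonempty)
    (hsubA : ∀ e ∈ E, e ⊆ A) (hchain : ∀ e ∈ E, ∀ f ∈ E, e ⊆ f ∨ f ⊆ e) (d : ℕ) :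
    Collapsible d (NCH A E) := by
  obtain ⟨e₀, he₀, hmin⟩ := Finset.exists_min_image E Finset.card hE
  have hminsub : ∀ e ∈ E, e₀ ⊆ e := by
    intro e he
    rcases hchain e₀ he₀ e he with h | h
    · exact h
    · have heq := Finset.eq_of_subset_of_card_le h (hmin e he)
      rw [heq]
  refine collapsible_of_max ?_ (A \ e₀) ?_ ?_
  · exact mem_NCH.mpr ⟨Finset.empty_subset _, e₀, he₀, Finset.disjoint_empty_right _⟩
  · exact mem_NCH.mpr ⟨Finset.sdiff_subset, e₀, he₀, Finset.disjoint_sdiff⟩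
  · intro W hW
    obtain ⟨hWA, e, he, hdisj⟩ := mem_NCH.mp hW
    intro x hxW
    refine Finset.mem_sdiff.mpr ⟨hWA hxW, fun hxe₀ => ?_⟩
    exact Finset.disjoint_left.mp hdisj (hminsub e he hxe₀) hxW

theorem gammaH_empty_edges {A : Finset V} : A.card ≤ gammaH A (∅ : Finset (Finset V)) := by
  obtain ⟨W, hWcard, hWsub, hWdom⟩ := gammaH_exists A (∅ : Finset (Finset V))
  have : A ⊆ W := by
    intro a ha
    rcases hWdom a ha with h | ⟨e, he, _⟩
    · exact h
    · exact absurd he (Finset.notMem_empty _)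
  rw [← hWcard]
  exact Finset.card_le_card this

theorem exists_simp_pair (G : SimpleGraph V) (hG : IsChordal G) (A : Finset V)
    (hA : A.Nonempty) (hnoiso : ∀ a ∈ A, ∃ b ∈ A, G.Adj a b) :
    ∃ z ∈ A, ∃ v ∈ A, G.Adj z v ∧ ∀ w ∈ A, G.Adj z w → w = v ∨ G.Adj v w :=
  exists_simp_pair' G hG A hA hnoiso

theorem NCH_collapsible (G : SimpleGraph V) (hG : IsChordal G) :
    ∀ (n : ℕ) (A : Finset V) (E : Finset (Finset V)), A.card ≤ n →
    (∀ e ∈ E, e ⊆ A) → (∀ e ∈ E, e.card ≤ 2) →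
    (∀ e ∈ E, ∀ x ∈ e, ∀ y ∈ e, x ≠ y → G.Adj x y) →
    (∀ x ∈ A, ∀ y ∈ A, G.Adj x y → ({x, y} : Finset V) ∈ E) →
    Collapsible (A.card - gammaH A E - 1) (NCH A E) := by
  intro n
  induction n with
  | zero =>
    intro A E hcard hsubA hcard2 h2adj hcomp
    rcases Finset.eq_empty_or_nonempty E with rfl | hEne
    · rw [NCH_empty]; exact Relation.ReflTransGen.refl
    · have hA0 : A = ∅ := Finset.card_eq_zero.mp (Nat.le_zero.mp hcard)
      subst hA0
      exact NCH_chain_collapsible hEne hsubA (by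
        intro e1 he1 e2 he2
        have h1 : e1 = ∅ := Finset.subset_empty.mp (hsubA e1 he1)
        subst h1; exact Or.inl (Finset.empty_subset _)) _
  | succ n ih =>
    intro A E hcard hsubA hcard2 h2adj hcomp
    rcases Finset.eq_empty_or_nonempty E with rfl | hEne
    · rw [NCH_empty]; exact Relation.ReflTransGen.refl
    by_cases hemp : (∅ : Finset V) ∈ E
    · refine collapsible_of_max ?_ A ?_ ?_
      · exact mem_NCH.mpr ⟨Finset.empty_subset _, ∅, hemp, Finset.disjoint_empty_right _⟩
      · exact mem_NCH.mpr ⟨Finset.Subset.refl _, ∅, hemp, Finset.disjoint_empty_left _⟩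
      · exact fun W hW => (mem_NCH.mp hW).1
    by_cases hsmall : A.card ≤ gammaH A E + 1
    · exact NCH_chain_collapsible hEne hsubA (chain_of_gammaBig hsubA hsmall) _
    push_neg at hsmall
    have hbig : gammaH A E + 2 ≤ A.card := hsmall
    -- case: isolated vertex
    by_cases hisoex : ∃ a ∈ A, ∀ e ∈ E, a ∉ e
    · obtain ⟨a, haA, haiso⟩ := hisoex
      rw [NCH_cone haA haiso]
      apply coneF_collapsible a (d := A.card - gammaH A E - 1) (K := NCH (A.erase a) E)
        (fun s hs => fun hmem => by
          have := (mem_NCH.mp hs).1 hmem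
          exact (Finset.mem_erase.mp this).1 rfl)
      have hih := ih (A.erase a) E (by rw [Finset.card_erase_of_mem haA]; omega)
        (fun e he => fun x hx => Finset.mem_erase.mpr ⟨fun h => haiso e he (h ▸ hx), hsubA e he hx⟩)
        hcard2 h2adj
        (fun x hx y hy hadj => hcomp x (Finset.mem_of_mem_erase hx) y (Finset.mem_of_mem_erase hy) hadj)
      refine collapsible_mono ?_ hih
      have h1 := gammaH_iso (E := E) haA
      rw [Finset.card_erase_of_mem haA]
      omega
    push_neg at hisoex
    -- find the collapse vertex v and the inequality gammaH A E ≤ gammaH (erase) (filter)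
    have hvfound : ∃ v ∈ A, gammaH A E ≤ gammaH (A.erase v) (E.filter fun e => v ∉ e) := by
      by_cases hsing : ∃ e ∈ E, e.card ≤ 1
      · obtain ⟨e, he, hec⟩ := hsing
        have hec1 : e.card = 1 := by
          have : e ≠ ∅ := fun h => hemp (h ▸ he)
          have := Finset.card_pos.mpr (Finset.nonempty_of_ne_empty this)
          omega
        obtain ⟨v, rfl⟩ := Finset.card_eq_one.mp hec1
        exact ⟨v, hsubA _ he (Finset.mem_singleton_self v),
          gammaH_sing he⟩
      · push_neg at hsing
        have hcard2' : ∀ e ∈ E, e.card = 2 := by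
          intro e he
          have h1 := hcard2 e he
          have h2 := hsing e he
          omega
        have hA : A.Nonempty := by
          have : 0 < A.card := by omega
          exact Finset.card_pos.mp this
        have hnoiso : ∀ a ∈ A, ∃ b ∈ A, G.Adj a b := by
          intro a ha
          obtain ⟨e, he, hae⟩ := hisoex a ha
          have hec : (e.erase a).card = 1 := by
            rw [Finset.card_erase_of_mem hae, hcard2' e he]
          obtain ⟨b, hb⟩ := Finset.card_eq_one.mp hec
          have hbe : b ∈ e.erase a := hb ▸ Finset.mem_singleton_self b
          obtain ⟨hba, hbe'⟩ := Finset.mem_erase.mp hbe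
          exact ⟨b, hsubA e he hbe', h2adj e he a hae b hbe' (Ne.symm hba)⟩
        obtain ⟨z, hzA, v, hvA, hzv, hsimp⟩ := exists_simp_pair G hG A hA hnoiso
        exact ⟨v, hvA, gammaH_good hzA hvA hzv hsubA hcard2' h2adj hcomp hsimp⟩
    obtain ⟨v, hvA, hγ₁⟩ := hvfound
    have hγ₂ := gammaH_shrink (E := E) hvA
    have hAe : (A.erase v).card = A.card - 1 := Finset.card_erase_of_mem hvA
    set d1 := A.card - gammaH A E - 2 with hd1
    have hgoal : A.card - gammaH A E - 1 = d1 + 1 := by omega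
    rw [hgoal]
    apply collapsible_link v
    · rw [NCH_link hvA]
      have hih := ih (A.erase v) (E.filter fun e => v ∉ e) (by omega)
        (fun e he => by
          obtain ⟨heE, hve⟩ := Finset.mem_filter.mp he
          exact fun x hx => Finset.mem_erase.mpr ⟨fun h => hve (h ▸ hx), hsubA e heE hx⟩)
        (fun e he => hcard2 e (Finset.mem_filter.mp he).1)
        (fun e he => h2adj e (Finset.mem_filter.mp he).1)
        (fun x hx y hy hadj => by
          obtain ⟨hxv, hxA⟩ := Finset.mem_erase.mp hx
          obtain ⟨hyv, hyA⟩ := Finset.mem_erase.mp hy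
          refine Finset.mem_filter.mpr ⟨hcomp x hxA y hyA hadj, ?_⟩
          intro hmem
          rcases Finset.mem_insert.mp hmem with rfl | h
          · exact hxv rfl
          · exact hyv (Finset.mem_singleton.mp h).symm)
      refine collapsible_mono ?_ hih
      omega
    · rw [NCH_del]
      have hih := ih (A.erase v) (E.image fun e => e.erase v) (by omega)
        (fun e' he' => by
          obtain ⟨e, he, rfl⟩ := Finset.mem_image.mp he'
          exact fun x hx => Finset.mem_erase.mpr ⟨(Finset.mem_erase.mp hx).1,
            hsubA e he (Finset.mem_of_mem_erase hx)⟩)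
        (fun e' he' => by
          obtain ⟨e, he, rfl⟩ := Finset.mem_image.mp he'
          exact (Finset.card_erase_le).trans (hcard2 e he))
        (fun e' he' => by
          obtain ⟨e, he, rfl⟩ := Finset.mem_image.mp he'
          exact fun x hx y hy hxy => h2adj e he x (Finset.mem_of_mem_erase hx)
            y (Finset.mem_of_mem_erase hy) hxy)
        (fun x hx y hy hadj => by
          obtain ⟨hxv, hxA⟩ := Finset.mem_erase.mp hx
          obtain ⟨hyv, hyA⟩ := Finset.mem_erase.mp hy
          refine Finset.mem_image.mpr ⟨{x, y}, hcomp x hxA y hyA hadj, ?_⟩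
          apply Finset.erase_eq_of_notMem
          intro hmem
          rcases Finset.mem_insert.mp hmem with rfl | h
          · exact hxv rfl
          · exact hyv (Finset.mem_singleton.mp h).symm)
      refine collapsible_mono ?_ hih
      omega

def E0 (G : SimpleGraph V) [DecidableRel G.Adj] : Finset (Finset V) :=
  ((Finset.univ ×ˢ Finset.univ).filter fun p => G.Adj p.1 p.2).image
    fun p => ({p.1, p.2} : Finset V)

theorem mem_E0 {G : SimpleGraph V} [DecidableRel G.Adj] {e : Finset V} :
    e ∈ E0 G ↔ ∃ x y, G.Adj x y ∧ e = ({x, y} : Finset V) := by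
  simp only [E0, Finset.mem_image, Finset.mem_filter, Finset.mem_product, Finset.mem_univ,
    true_and, and_true, Prod.exists]
  constructor
  · rintro ⟨x, y, hadj, rfl⟩; exact ⟨x, y, hadj, rfl⟩
  · rintro ⟨x, y, hadj, rfl⟩; exact ⟨x, y, hadj, rfl⟩

theorem NC_eq (G : SimpleGraph V) [DecidableRel G.Adj] :
    NC G = NCH Finset.univ (E0 G) := by
  ext W
  rw [mem_NCH]
  simp only [NC, Finset.mem_filter, Finset.mem_univ, true_and]
  constructor
  · intro hni
    refine ⟨Finset.subset_univ _, ?_⟩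
    unfold IndepSet at hni
    push_neg at hni
    obtain ⟨u, hu, v, hv, hadj⟩ := hni
    rw [Finset.mem_compl] at hu hv
    refine ⟨{u, v}, mem_E0.mpr ⟨u, v, hadj, rfl⟩, ?_⟩
    rw [Finset.disjoint_left]
    intro x hx
    rcases Finset.mem_insert.mp hx with rfl | h
    · exact hu
    · rw [Finset.mem_singleton.mp h]; exact hv
  · rintro ⟨-, e, he, hdisj⟩
    obtain ⟨x, y, hadj, rfl⟩ := mem_E0.mp he
    intro hindep
    exact hindep x (Finset.mem_compl.mpr (Finset.disjoint_left.mp hdisj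
        (Finset.mem_insert_self _ _)))
      y (Finset.mem_compl.mpr (Finset.disjoint_left.mp hdisj
        (Finset.mem_insert_of_mem (Finset.mem_singleton_self _)))) hadj

theorem dominates_iff (G : SimpleGraph V) [DecidableRel G.Adj] (W : Finset V) :
    Dominates G W Finset.univ ↔ DomH Finset.univ (E0 G) W := by
  constructor
  · intro h
    refine ⟨Finset.subset_univ _, fun a _ => ?_⟩
    rcases h a (Finset.mem_univ a) with h' | ⟨w, hw, hadj⟩
    · exact Or.inl h'
    · refine Or.inr ⟨{w, a}, mem_E0.mpr ⟨w, a, hadj, rfl⟩,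
        Finset.mem_insert_of_mem (Finset.mem_singleton_self _), ?_⟩
      intro x hx
      obtain ⟨hxa, hxm⟩ := Finset.mem_erase.mp hx
      rcases Finset.mem_insert.mp hxm with rfl | h'
      · exact hw
      · exact absurd (Finset.mem_singleton.mp h') hxa
  · rintro ⟨-, h⟩
    intro a _
    rcases h a (Finset.mem_univ a) with h' | ⟨e, he, hae, hsub⟩
    · exact Or.inl h'
    · obtain ⟨x, y, hadj, rfl⟩ := mem_E0.mp he
      have hxy := G.ne_of_adj hadj
      rcases Finset.mem_insert.mp hae with rfl | h'
      · refine Or.inr ⟨y, hsub (Finset.mem_erase.mpr ⟨Ne.symm hxy,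
          Finset.mem_insert_of_mem (Finset.mem_singleton_self _)⟩), hadj.symm⟩
      · obtain rfl : a = y := Finset.mem_singleton.mp h'
        refine Or.inr ⟨x, hsub (Finset.mem_erase.mpr ⟨hxy, Finset.mem_insert_self _ _⟩), hadj⟩

theorem gamma_eq (G : SimpleGraph V) [DecidableRel G.Adj] :
    gamma G = gammaH Finset.univ (E0 G) := by
  unfold gamma gammaH
  congr 1
  ext k
  constructor
  · rintro ⟨W, hc, hd⟩; exact ⟨W, hc, (dominates_iff G W).mp hd⟩
  · rintro ⟨W, hc, hd⟩; exact ⟨W, hc, (dominates_iff G W).mpr hd⟩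

theorem noncover_collapsible_gamma' (G : SimpleGraph V) [DecidableRel G.Adj]
    (hG : IsChordal G) (hiso : ∀ v : V, ∃ u, G.Adj v u) :
    Collapsible (Fintype.card V - gamma G - 1) (NC G) := by
  rw [NC_eq, gamma_eq, ← Finset.card_univ]
  refine NCH_collapsible G hG (Finset.univ.card) Finset.univ (E0 G) le_rfl ?_ ?_ ?_ ?_
  · exact fun e _ => Finset.subset_univ _
  · intro e he
    obtain ⟨x, y, hadj, rfl⟩ := mem_E0.mp he
    exact (Finset.card_insert_le _ _).trans (by rw [Finset.card_singleton])
  · intro e he a ha b hb hab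
    obtain ⟨x, y, hadj, rfl⟩ := mem_E0.mp he
    rcases Finset.mem_insert.mp ha with rfl | ha' <;>
      rcases Finset.mem_insert.mp hb with rfl | hb'
    · exact absurd rfl hab
    · rw [Finset.mem_singleton.mp hb']; exact hadj
    · rw [Finset.mem_singleton.mp ha']; exact hadj.symm
    · rw [Finset.mem_singleton.mp ha', Finset.mem_singleton.mp hb'] at hab
      exact absurd rfl hab
  · exact fun x _ y _ hadj => mem_E0.mpr ⟨x, y, hadj, rfl⟩


/-- For a chordal graph `G` on `n` vertices with no isolated vertices,
`NC(G)` is `(n - γ(G) - 1)`-collapsible. -/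
theorem noncover_collapsible_gamma (G : SimpleGraph V) [DecidableRel G.Adj]
    (hG : IsChordal G) (hiso : ∀ v : V, ∃ u, G.Adj v u) :
    Collapsible (Fintype.card V - gamma G - 1) (NC G) :=
  noncover_collapsible_gamma' G hG hiso
end
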